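/- arXiv:1509.08879 — 2 statements merged into one kernel-verified Lean document; each statement's English description precedes it below -/
import Mathlib

section
/- Let ℓ ≥ 1 and N > 2ℓ+2, with periodic boundary conditions or special boundary conditions s = (c₁, c_N). Then: (a) H_{Q₁}^f = 0 for every f < ℓ; (b) for every f ≥ ℓ, every class in H_{Q₁}^f has a representative of the form G ψ' for some ψ' ∈ V_{Ñ, f−ℓ} (where V_Ñ carries periodic boundary conditions, resp. special boundary conditions (c₁, c_N)), and nonzero classes have such representatives with ψ' ≠ 0. -/
attribute [local instance 10] Classical.propDecidable

noncomputable section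

/-- A configuration of `N` sites: `true` = occupied, `false` = empty. -/
abbrev Config (N : ℕ) := Fin N → Bool

/-- Extension of a configuration to all of `ℕ`, by empty sites outside the chain. -/
def extc {N : ℕ} (σ : Config N) (t : ℕ) : Bool :=
  if h : t < N then σ ⟨t, h⟩ else false

/-- The fermion number: the number of occupied sites. -/
def fermions {N : ℕ} (σ : Config N) : ℕ :=
  (Finset.univ.filter fun i => σ i = true).card

/-- Allowed configurations of the open chain of `N` sites with exclusion parameter `ℓ`
and special boundary conditions `(c₁, cN)`: no cluster is longer than `ℓ`, the cluster
containing the first site (if occupied) has length at most `c₁`, and the cluster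
containing the last site (if occupied) has length at most `cN`. -/
def OpenOK (N ℓ c₁ cN : ℕ) (σ : Config N) : Prop :=
  (∀ a : ℕ, ¬ ∀ k ≤ ℓ, extc σ (a + k) = true) ∧
  (¬ (c₁ + 1 ≤ N ∧ ∀ k ≤ c₁, extc σ k = true)) ∧
  (¬ (cN + 1 ≤ N ∧ ∀ k ≤ cN, extc σ (N - 1 - k) = true))

/-- Cyclic shift of a site of the closed chain by `k` steps. -/
def cyc {N : ℕ} (i : Fin N) (k : ℕ) : Fin N :=
  ⟨(i.1 + k) % N, Nat.mod_lt _ i.pos⟩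

/-- Allowed configurations of the closed chain of `N` sites with periodic boundary
conditions: the chain is not fully occupied and no maximal cyclic run of occupied
sites is longer than `ℓ`. -/
def PerOK (N ℓ : ℕ) (σ : Config N) : Prop :=
  ∀ i : Fin N, ∃ k ≤ ℓ, σ (cyc i k) = false

/-- The fermionic sign `(-1)^{#{j < i : σ j = 1}}`. -/
def sgn {N : ℕ} (σ : Config N) (i : Fin N) : ℂ :=
  (-1 : ℂ) ^ ((Finset.univ.filter fun j => j < i ∧ σ j = true).card)

/-- The Hilbert space `V_N`: complex functions on allowed configurations. -/
abbrev AState (N : ℕ) (OK : Config N → Prop) := {σ : Config N // OK σ} → ℂ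

/-- Matrix of the supercharge with amplitudes `A`, with particle insertion
restricted to the sublattice `S`: the entry `(τ, σ)` is the amplitude (with fermionic
sign) for obtaining `τ` from `σ` by occupying an empty site of `S`. -/
def QmatA (N : ℕ) (OK : Config N → Prop) (S : Fin N → Prop)
    (A : Config N → Fin N → ℂ) :
    Matrix {σ : Config N // OK σ} {σ : Config N // OK σ} ℂ := fun τ σ =>
  ∑ i : Fin N,
    if S i ∧ σ.1 i = false ∧ τ.1 = Function.update σ.1 i true
    then A σ.1 i * sgn σ.1 i else 0

/-- The supercharge with amplitudes `A` restricted to the sublattice `S`, as a linear map. -/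
def QopA (N : ℕ) (OK : Config N → Prop) (S : Fin N → Prop)
    (A : Config N → Fin N → ℂ) : AState N OK →ₗ[ℂ] AState N OK :=
  (QmatA N OK S A).mulVecLin

/-- The unit-coupling supercharge restricted to the sublattice `S`. -/
def Qop (N : ℕ) (OK : Config N → Prop) (S : Fin N → Prop) :
    AState N OK →ₗ[ℂ] AState N OK :=
  QopA N OK S fun _ _ => 1

/-- The subspace `V_{N,f}` of states supported on configurations with fermion number `f`. -/
def gradeV (N : ℕ) (OK : Config N → Prop) (f : ℕ) :
    Submodule ℂ (AState N OK) where
  carrier := {ψ | ∀ σ, fermions σ.1 ≠ f → ψ σ = 0}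
  add_mem' := by
    intro a b ha hb σ h
    show a σ + b σ = 0
    rw [ha σ h, hb σ h, add_zero]
  zero_mem' := by intro σ h; rfl
  smul_mem' := by
    intro c a ha σ h
    show c * a σ = 0
    rw [ha σ h, mul_zero]

/-- The cocycles at gradeV `f`: `ker Q ∩ V_{N,f}` (for the supercharge restricted to `S`). -/
def cocycles (N : ℕ) (OK : Config N → Prop) (S : Fin N → Prop) (f : ℕ) :
    Submodule ℂ (AState N OK) :=
  LinearMap.ker (Qop N OK S) ⊓ gradeV N OK f

/-- The coboundaries at gradeV `f`: `Q (V_{N,f-1})` (for the supercharge restricted to `S`). -/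
def cobounds (N : ℕ) (OK : Config N → Prop) (S : Fin N → Prop) (f : ℕ) :
    Submodule ℂ (AState N OK) :=
  (gradeV N OK (f - 1)).map (Qop N OK S)

/-- The cohomology `H_Q^f = ker (Q : V_{N,f} → V_{N,f+1}) / Q (V_{N,f-1})`. -/
abbrev CohSpace (N : ℕ) (OK : Config N → Prop) (S : Fin N → Prop) (f : ℕ) :=
  cocycles N OK S f ⧸ ((cobounds N OK S f).comap (cocycles N OK S f).subtype)

/-- The dimension of `H_Q^f`. -/
def cohDim (N : ℕ) (OK : Config N → Prop) (S : Fin N → Prop) (f : ℕ) : ℕ :=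
  Module.finrank ℂ (CohSpace N OK S f)

/-- The cohomology class represented by a cocycle. -/
def cohClass (N : ℕ) (OK : Config N → Prop) (S : Fin N → Prop) (f : ℕ)
    (ψ : AState N OK) (h : ψ ∈ cocycles N OK S f) : CohSpace N OK S f :=
  Submodule.Quotient.mk ⟨ψ, h⟩

/-- The first sublattice `S₁ = {1, …, ℓ+2}` (the first `ℓ+2` sites). -/
def S1 (N ℓ : ℕ) : Fin N → Prop := fun i => i.1 < ℓ + 2

/-- The second sublattice `S₂ = {ℓ+3, …, N}` (the remaining sites). -/
def S2 (N ℓ : ℕ) : Fin N → Prop := fun i => ℓ + 2 ≤ i.1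

/-- The configuration `χ σ'`: the `(ℓ+2)`-site configuration `χ = 0 1…1 0`
followed by the `Ñ`-site configuration `σ'`. -/
def glue (ℓ Nt : ℕ) (σ : Config Nt) : Config (Nt + (ℓ + 2)) := fun i =>
  if h : i.1 < ℓ + 2 then decide (1 ≤ i.1 ∧ i.1 ≤ ℓ)
  else σ ⟨i.1 - (ℓ + 2), by have h2 := i.isLt; omega⟩

/-- Matrix of the map `G : V_Ñ → V_N`, `e_{σ'} ↦ e_{χ σ'}`. -/
def Gmat (ℓ Nt : ℕ) (OKN : Config (Nt + (ℓ + 2)) → Prop) (OKt : Config Nt → Prop) :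
    Matrix {σ : Config (Nt + (ℓ + 2)) // OKN σ} {σ : Config Nt // OKt σ} ℂ :=
  fun τ σ => if τ.1 = glue ℓ Nt σ.1 then 1 else 0

/-- The linear map `G : V_Ñ → V_N` sending `e_{σ'}` to `e_{χ σ'}`. -/
def Gop (ℓ Nt : ℕ) (OKN : Config (Nt + (ℓ + 2)) → Prop) (OKt : Config Nt → Prop) :
    AState Nt OKt →ₗ[ℂ] AState (Nt + (ℓ + 2)) OKN :=
  (Gmat ℓ Nt OKN OKt).mulVecLin

namespace HQ1

variable {N : ℕ}

def upc (σ : Config N) (i : Fin N) : Config N := Function.update σ i true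
def dnc (σ : Config N) (i : Fin N) : Config N := Function.update σ i false

@[simp] lemma upc_self (σ : Config N) (i : Fin N) : upc σ i i = true := by simp [upc]

@[simp] lemma dnc_self (σ : Config N) (i : Fin N) : dnc σ i i = false := by simp [dnc]

lemma upc_other (σ : Config N) (i j : Fin N) (h : j ≠ i) : upc σ i j = σ j := by
  simp [upc, Function.update_of_ne h]

lemma dnc_other (σ : Config N) (i j : Fin N) (h : j ≠ i) : dnc σ i j = σ j := by
  simp [dnc, Function.update_of_ne h]

lemma upc_dnc_self (σ : Config N) (i : Fin N) (h : σ i = true) : upc (dnc σ i) i = σ := by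
  funext j
  by_cases hj : j = i
  · subst hj; simp [h]
  · simp [upc_other _ _ _ hj, dnc_other _ _ _ hj]

lemma dnc_upc_self (σ : Config N) (i : Fin N) (h : σ i = false) : dnc (upc σ i) i = σ := by
  funext j
  by_cases hj : j = i
  · subst hj; simp [h]
  · simp [upc_other _ _ _ hj, dnc_other _ _ _ hj]

lemma dnc_upc_comm (σ : Config N) (i w : Fin N) (h : i ≠ w) :
    dnc (upc σ w) i = upc (dnc σ i) w := by
  unfold upc dnc
  exact Function.update_comm h.symm _ _ σ

/-! ### sign lemmas -/

lemma sgn_sq (σ : Config N) (i : Fin N) : sgn σ i * sgn σ i = 1 := by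
  unfold sgn
  rw [← pow_add]
  exact Even.neg_one_pow ⟨_, rfl⟩

lemma sgn_update_ge (σ : Config N) (w i : Fin N) (b : Bool) (h : i ≤ w) :
    sgn (Function.update σ w b) i = sgn σ i := by
  unfold sgn
  congr 2
  apply Finset.filter_congr
  intro j _
  have hj : j < i → j ≠ w := fun h1 hjw => absurd h1 (by rw [hjw]; exact not_lt.2 h)
  constructor <;> intro ⟨h1, h2⟩ <;> refine ⟨h1, ?_⟩
  · rwa [Function.update_of_ne (hj h1)] at h2
  · rwa [Function.update_of_ne (hj h1)]

lemma sgn_dnc_ge (σ : Config N) (w i : Fin N) (h : i ≤ w) : sgn (dnc σ w) i = sgn σ i :=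
  sgn_update_ge σ w i false h

lemma sgn_upc_ge (σ : Config N) (w i : Fin N) (h : i ≤ w) : sgn (upc σ w) i = sgn σ i :=
  sgn_update_ge σ w i true h

lemma neg_one_pow_pred {c : ℕ} (hc : 1 ≤ c) : (-1 : ℂ) ^ (c - 1) = -(-1 : ℂ) ^ c := by
  have h : c = (c - 1) + 1 := by omega
  conv_rhs => rw [h, pow_succ]
  ring

lemma sgn_dnc_lt (σ : Config N) (w i : Fin N) (hw : w < i) (ho : σ w = true) :
    sgn (dnc σ w) i = -sgn σ i := by
  unfold sgn
  have hset : (Finset.univ.filter fun j => j < i ∧ dnc σ w j = true)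
      = (Finset.univ.filter fun j => j < i ∧ σ j = true).erase w := by
    ext j
    simp only [Finset.mem_filter, Finset.mem_erase, Finset.mem_univ, true_and]
    constructor
    · rintro ⟨h1, h2⟩
      have hj : j ≠ w := fun hjw => by subst hjw; simp at h2
      exact ⟨hj, h1, by rwa [dnc_other _ _ _ hj] at h2⟩
    · rintro ⟨hj, h1, h2⟩
      exact ⟨h1, by rwa [dnc_other _ _ _ hj]⟩
  have hmem : w ∈ (Finset.univ.filter fun j => j < i ∧ σ j = true) := by
    simp [hw, ho]
  rw [hset, Finset.card_erase_of_mem hmem]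
  exact neg_one_pow_pred (Finset.card_pos.2 ⟨w, hmem⟩)

lemma sgn_upc_lt (σ : Config N) (w i : Fin N) (hw : w < i) (ho : σ w = false) :
    sgn (upc σ w) i = -sgn σ i := by
  have h1 : σ = dnc (upc σ w) w := (dnc_upc_self σ w ho).symm
  have h2 := sgn_dnc_lt (upc σ w) w i hw (by simp)
  rw [← h1] at h2
  rw [h2]
  ring

/-! ### fermion counting -/

lemma fermions_upc (σ : Config N) (w : Fin N) (h : σ w = false) :
    fermions (upc σ w) = fermions σ + 1 := by
  unfold fermions
  have hset : (Finset.univ.filter fun i => upc σ w i = true)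
      = insert w (Finset.univ.filter fun i => σ i = true) := by
    ext j
    simp only [Finset.mem_filter, Finset.mem_insert, Finset.mem_univ, true_and]
    by_cases hj : j = w
    · subst hj; simp
    · rw [upc_other _ _ _ hj]; simp [hj]
  rw [hset, Finset.card_insert_of_notMem (by simp [h])]

lemma fermions_dnc (σ : Config N) (w : Fin N) (h : σ w = true) :
    fermions σ = fermions (dnc σ w) + 1 := by
  have h2 : fermions (upc (dnc σ w) w) = fermions (dnc σ w) + 1 :=
    fermions_upc _ _ (by simp)
  rwa [upc_dnc_self σ w h] at h2

/-! ### the operators, unbundled -/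

def QW (ℓ N : ℕ) (F : Config N → ℂ) (τ : Config N) : ℂ :=
  ∑ i : Fin N, if i.1 < ℓ + 2 ∧ τ i = true then sgn (dnc τ i) i * F (dnc τ i) else 0

def KW (N : ℕ) (vt : Config N → Option (Fin N)) (F : Config N → ℂ) (μ : Config N) : ℂ :=
  (vt μ).elim 0 (fun w => if μ w = false then sgn μ w * F (upc μ w) else 0)

def STG (ℓ N : ℕ) (OKN : Config N → Prop) (vt : Config N → Option (Fin N))
    (F : Config N → ℂ) : Config N → ℂ := fun σ =>
  if OKN σ then F σ - QW ℓ N (KW N vt F) σ else 0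

def xt (N : ℕ) (OKN : Config N → Prop) (ψ : AState N OKN) : Config N → ℂ :=
  fun σ => if h : OKN σ then ψ ⟨σ, h⟩ else 0

section oplemmas

variable (ℓ : ℕ) {N : ℕ}

lemma QW_sub (F G : Config N → ℂ) (τ : Config N) :
    QW ℓ N (fun μ => F μ - G μ) τ = QW ℓ N F τ - QW ℓ N G τ := by
  unfold QW
  rw [← Finset.sum_sub_distrib]
  apply Finset.sum_congr rfl
  intro i _
  split <;> ring

lemma QW_add (F G : Config N → ℂ) (τ : Config N) :
    QW ℓ N (fun μ => F μ + G μ) τ = QW ℓ N F τ + QW ℓ N G τ := by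
  unfold QW
  rw [← Finset.sum_add_distrib]
  apply Finset.sum_congr rfl
  intro i _
  split <;> ring

lemma QW_congr {F G : Config N → ℂ} (τ : Config N)
    (h : ∀ i : Fin N, i.1 < ℓ + 2 → τ i = true → F (dnc τ i) = G (dnc τ i)) :
    QW ℓ N F τ = QW ℓ N G τ := by
  unfold QW
  apply Finset.sum_congr rfl
  intro i _
  split
  · next hc => rw [h i hc.1 hc.2]
  · rfl

lemma sgn_prod (σ : Config N) (i w : Fin N) (hne : i ≠ w) (hi : σ i = true)
    (hw : σ w = false) :
    sgn (dnc σ i) i * sgn (dnc σ i) w = -(sgn σ w * sgn (dnc (upc σ w) i) i) := by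
  have hA : sgn (dnc σ i) i = sgn σ i := sgn_dnc_ge σ i i le_rfl
  have hB : sgn (dnc (upc σ w) i) i = sgn (upc σ w) i := sgn_dnc_ge _ i i le_rfl
  rcases lt_or_gt_of_ne hne with h | h
  · rw [hA, hB, show sgn (dnc σ i) w = -sgn σ w from sgn_dnc_lt σ i w h hi,
      sgn_upc_ge σ w i h.le]
    ring
  · rw [hA, hB, show sgn (dnc σ i) w = sgn σ w from sgn_dnc_ge σ i w h.le,
      sgn_upc_lt σ w i h hw]
    ring

lemma sgn_prod2 (σ : Config N) (i j : Fin N) (hne : i ≠ j) (hi : σ i = true)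
    (hj : σ j = true) :
    sgn (dnc σ i) i * sgn (dnc (dnc σ i) j) j
      = -(sgn (dnc σ j) j * sgn (dnc (dnc σ j) i) i) := by
  have key : ∀ a b : Fin N, b < a → σ a = true → σ b = true →
      sgn (dnc σ a) a * sgn (dnc (dnc σ a) b) b = sgn σ a * sgn σ b := by
    intro a b hba ha hb
    rw [sgn_dnc_ge σ a a le_rfl, sgn_dnc_ge _ b b le_rfl, sgn_dnc_ge σ a b hba.le]
  have key2 : ∀ a b : Fin N, b < a → σ a = true → σ b = true →
      sgn (dnc σ b) b * sgn (dnc (dnc σ b) a) a = -(sgn σ a * sgn σ b) := by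
    intro a b hba ha hb
    rw [sgn_dnc_ge σ b b le_rfl, sgn_dnc_ge _ a a le_rfl,
      sgn_dnc_lt σ b a hba hb]
    ring
  rcases lt_or_gt_of_ne hne with h | h
  · rw [key j i h hj hi, key2 j i h hj hi]
  · rw [key i j h hi hj, key2 i j h hi hj]; ring

lemma qq_zero (F : Config N → ℂ) (σ : Config N) :
    QW ℓ N (fun μ => QW ℓ N F μ) σ = 0 := by
  have expand : QW ℓ N (fun μ => QW ℓ N F μ) σ
      = ∑ i : Fin N, ∑ j : Fin N, (if i.1 < ℓ + 2 ∧ σ i = true then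
          sgn (dnc σ i) i * (if j.1 < ℓ + 2 ∧ dnc σ i j = true then
            sgn (dnc (dnc σ i) j) j * F (dnc (dnc σ i) j) else 0) else 0) := by
    unfold QW
    apply Finset.sum_congr rfl
    intro i _
    split
    · rw [Finset.mul_sum]
    · exact Finset.sum_const_zero.symm
  rw [expand]
  set S := ∑ i : Fin N, ∑ j : Fin N, (if i.1 < ℓ + 2 ∧ σ i = true then
          sgn (dnc σ i) i * (if j.1 < ℓ + 2 ∧ dnc σ i j = true then
            sgn (dnc (dnc σ i) j) j * F (dnc (dnc σ i) j) else 0) else 0) with hSdef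
  have key : ∀ i j : Fin N,
      (if i.1 < ℓ + 2 ∧ σ i = true then
        sgn (dnc σ i) i *
          (if j.1 < ℓ + 2 ∧ dnc σ i j = true then
            sgn (dnc (dnc σ i) j) j * F (dnc (dnc σ i) j) else 0)
      else 0)
      = -(if j.1 < ℓ + 2 ∧ σ j = true then
        sgn (dnc σ j) j *
          (if i.1 < ℓ + 2 ∧ dnc σ j i = true then
            sgn (dnc (dnc σ j) i) i * F (dnc (dnc σ j) i) else 0)
      else 0) := by
    intro i j
    by_cases hij : i = j
    · subst hij
      simp
    · by_cases hc : (i.1 < ℓ + 2 ∧ σ i = true) ∧ (j.1 < ℓ + 2 ∧ σ j = true)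
      · have hdij : dnc σ i j = true := by
          rw [dnc_other _ _ _ (Ne.symm hij)]; exact hc.2.2
        have hdji : dnc σ j i = true := by
          rw [dnc_other _ _ _ hij]; exact hc.1.2
        rw [if_pos hc.1, if_pos hc.2, if_pos ⟨hc.2.1, hdij⟩, if_pos ⟨hc.1.1, hdji⟩]
        have hcomm : dnc (dnc σ i) j = dnc (dnc σ j) i := by
          unfold dnc; exact Function.update_comm hij _ _ σ
        have hsg := sgn_prod2 σ i j hij hc.1.2 hc.2.2
        calc sgn (dnc σ i) i * (sgn (dnc (dnc σ i) j) j * F (dnc (dnc σ i) j))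
            = (sgn (dnc σ i) i * sgn (dnc (dnc σ i) j) j) * F (dnc (dnc σ j) i) := by
              rw [hcomm]; ring
          _ = -(sgn (dnc σ j) j * (sgn (dnc (dnc σ j) i) i * F (dnc (dnc σ j) i))) := by
              rw [hsg]; ring
      · rcases not_and_or.mp hc with hni | hnj
        · rw [if_neg hni]
          by_cases hcj : j.1 < ℓ + 2 ∧ σ j = true
          · rw [if_pos hcj]
            have hx : ¬(i.1 < ℓ + 2 ∧ dnc σ j i = true) := by
              rw [dnc_other _ _ _ hij]; exact hni
            rw [if_neg hx, mul_zero, neg_zero]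
          · rw [if_neg hcj, neg_zero]
        · rw [if_neg hnj, neg_zero]
          by_cases hci : i.1 < ℓ + 2 ∧ σ i = true
          · rw [if_pos hci]
            have hx : ¬(j.1 < ℓ + 2 ∧ dnc σ i j = true) := by
              rw [dnc_other _ _ _ (Ne.symm hij)]; exact hnj
            rw [if_neg hx, mul_zero]
          · rw [if_neg hci]
  have hS : S = -S := by
    nth_rewrite 1 [hSdef]
    have e1 : (∑ i : Fin N, ∑ j : Fin N, (if i.1 < ℓ + 2 ∧ σ i = true then
          sgn (dnc σ i) i * (if j.1 < ℓ + 2 ∧ dnc σ i j = true then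
            sgn (dnc (dnc σ i) j) j * F (dnc (dnc σ i) j) else 0) else 0))
        = ∑ i : Fin N, ∑ j : Fin N, -(if j.1 < ℓ + 2 ∧ σ j = true then
          sgn (dnc σ j) j * (if i.1 < ℓ + 2 ∧ dnc σ j i = true then
            sgn (dnc (dnc σ j) i) i * F (dnc (dnc σ j) i) else 0) else 0) :=
      Finset.sum_congr rfl fun i _ => Finset.sum_congr rfl fun j _ => key i j
    rw [e1]
    simp only [Finset.sum_neg_distrib]
    congr 1
    exact Finset.sum_comm
  have h2 : (2 : ℂ) * S = 0 := by
    rw [two_mul]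
    nth_rewrite 1 [hS]
    ring
  rcases mul_eq_zero.mp h2 with h | h
  · exact absurd h two_ne_zero
  · exact h

lemma xt_ok {OKN : Config N → Prop} (ψ : AState N OKN) (σ : Config N) (h : OKN σ) :
    xt N OKN ψ σ = ψ ⟨σ, h⟩ := dif_pos h

lemma xt_nok {OKN : Config N → Prop} (ψ : AState N OKN) (σ : Config N) (h : ¬OKN σ) :
    xt N OKN ψ σ = 0 := dif_neg h

lemma qop_eq {OKN : Config N → Prop} (ψ : AState N OKN) (τ : Config N) (hτ : OKN τ) :
    Qop N OKN (S1 N ℓ) ψ ⟨τ, hτ⟩ = QW ℓ N (xt N OKN ψ) τ := by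
  unfold Qop QopA
  rw [Matrix.mulVecLin_apply]
  unfold Matrix.mulVec dotProduct QmatA
  simp only [one_mul]
  have step1 : (∑ σ' : {σ : Config N // OKN σ},
        (∑ i : Fin N, if S1 N ℓ i ∧ σ'.1 i = false ∧ τ = Function.update σ'.1 i true
          then sgn σ'.1 i else 0) * ψ σ')
      = ∑ i : Fin N, ∑ σ' : {σ : Config N // OKN σ},
        (if S1 N ℓ i ∧ σ'.1 i = false ∧ τ = Function.update σ'.1 i true
          then sgn σ'.1 i else 0) * ψ σ' := by
    rw [Finset.sum_comm]
    apply Finset.sum_congr rfl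
    intro σ' _
    rw [Finset.sum_mul]
  rw [step1]
  apply Finset.sum_congr rfl
  intro i _
  by_cases hc : i.1 < ℓ + 2 ∧ τ i = true
  · by_cases hok : OKN (dnc τ i)
    · rw [if_pos hc, xt_ok _ _ hok]
      rw [Finset.sum_eq_single (⟨dnc τ i, hok⟩ : {σ : Config N // OKN σ})]
      · rw [if_pos ⟨hc.1, dnc_self τ i, (upc_dnc_self τ i hc.2).symm⟩]
      · intro σ' _ hne
        rw [if_neg]
        · exact zero_mul _
        · rintro ⟨_, h1, h2⟩
          apply hne
          apply Subtype.ext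
          show σ'.1 = dnc τ i
          rw [h2]
          exact (dnc_upc_self σ'.1 i h1).symm
      · intro h; exact absurd (Finset.mem_univ _) h
    · rw [if_pos hc, xt_nok _ _ hok, mul_zero]
      apply Finset.sum_eq_zero
      intro σ' _
      rw [if_neg]
      · exact zero_mul _
      · rintro ⟨_, h1, h2⟩
        apply hok
        have : σ'.1 = dnc τ i := by rw [h2]; exact (dnc_upc_self σ'.1 i h1).symm
        rw [← this]
        exact σ'.2
  · rw [if_neg hc]
    apply Finset.sum_eq_zero
    intro σ' _
    rw [if_neg]
    · exact zero_mul _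
    · rintro ⟨h0, h1, h2⟩
      apply hc
      refine ⟨h0, ?_⟩
      rw [h2]
      exact upc_self σ'.1 i

lemma stg_eq (OKN : Config N → Prop) (vt : Config N → Option (Fin N)) (F : Config N → ℂ)
    (σ : Config N) (h : OKN σ) :
    STG ℓ N OKN vt F σ = F σ - QW ℓ N (KW N vt F) σ := if_pos h

lemma stg_nok (OKN : Config N → Prop) (vt : Config N → Option (Fin N)) (F : Config N → ℂ)
    (σ : Config N) (h : ¬OKN σ) : STG ℓ N OKN vt F σ = 0 := if_neg h

lemma kw_none (vt : Config N → Option (Fin N)) (F : Config N → ℂ) (μ : Config N)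
    (h : vt μ = none) : KW N vt F μ = 0 := by unfold KW; rw [h]; rfl

lemma kw_some (vt : Config N → Option (Fin N)) (F : Config N → ℂ) (μ : Config N) (w : Fin N)
    (h : vt μ = some w) :
    KW N vt F μ = if μ w = false then sgn μ w * F (upc μ w) else 0 := by
  unfold KW; rw [h]; rfl

/-- Generic cancellation lemma: at sites where the matched partner exists, the
stage-transformed cocycle vanishes. -/
lemma gen_a (OKN : Config N → Prop) (vt : Config N → Option (Fin N))
    (hvt : ∀ (σ : Config N) (i : Fin N), i.1 < ℓ + 2 → vt (dnc σ i) = vt σ)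
    (F : Config N → ℂ) (hcoc : ∀ σ, OKN σ → QW ℓ N F σ = 0)
    (σ : Config N) (hσ : OKN σ) (w : Fin N) (hw : vt σ = some w) (hwb : w.1 < ℓ + 2)
    (hcase : σ w = true ∨ OKN (upc σ w)) :
    STG ℓ N OKN vt F σ = 0 := by
  rw [stg_eq ℓ OKN vt F σ hσ]
  by_cases hwt : σ w = true
  · have hqk : QW ℓ N (KW N vt F) σ = F σ := by
      unfold QW
      rw [Finset.sum_eq_single w
        (fun j _ hj => by
          by_cases hc : j.1 < ℓ + 2 ∧ σ j = true
          · have hd : dnc σ j w = true := by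
              rw [dnc_other σ j w (Ne.symm hj)]; exact hwt
            rw [if_pos hc, kw_some _ _ _ w ((hvt σ j hc.1).trans hw),
              if_neg (by simp [hd]), mul_zero]
          · rw [if_neg hc])
        (fun h => absurd (Finset.mem_univ w) h)]
      rw [if_pos ⟨hwb, hwt⟩, kw_some _ _ _ w ((hvt σ w hwb).trans hw),
        if_pos (dnc_self σ w), upc_dnc_self σ w hwt, ← mul_assoc, sgn_sq, one_mul]
    rw [hqk]; ring
  · have hwf : σ w = false := by
      cases h : σ w
      · rfl
      · exact absurd h hwt
    have hup : OKN (upc σ w) := hcase.resolve_left hwt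
    have h0 := hcoc (upc σ w) hup
    unfold QW at h0
    set g : Fin N → ℂ := fun j => if j.1 < ℓ + 2 ∧ upc σ w j = true
      then sgn (dnc (upc σ w) j) j * F (dnc (upc σ w) j) else 0 with hg
    have hgw : g w = sgn σ w * F σ := by
      rw [hg]
      simp only
      rw [if_pos ⟨hwb, upc_self σ w⟩, dnc_upc_self σ w hwf]
    have h1 : g w + ∑ j ∈ Finset.univ.erase w, g j = 0 := by
      rw [Finset.add_sum_erase Finset.univ g (Finset.mem_univ w)]
      exact h0
    have hrest : ∑ j ∈ Finset.univ.erase w, g j = -(sgn σ w * F σ) := by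
      linear_combination h1 - hgw
    have hqk : QW ℓ N (KW N vt F) σ = F σ := by
      unfold QW
      have hzw : (if w.1 < ℓ + 2 ∧ σ w = true then
          sgn (dnc σ w) w * KW N vt F (dnc σ w) else 0) = 0 := by
        rw [if_neg]
        rintro ⟨_, h⟩
        rw [hwf] at h
        exact Bool.false_ne_true h
      calc (∑ i : Fin N, if i.1 < ℓ + 2 ∧ σ i = true then
              sgn (dnc σ i) i * KW N vt F (dnc σ i) else 0)
          = ∑ i ∈ Finset.univ.erase w, (if i.1 < ℓ + 2 ∧ σ i = true then
              sgn (dnc σ i) i * KW N vt F (dnc σ i) else 0) := by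
            rw [← Finset.add_sum_erase Finset.univ _ (Finset.mem_univ w), hzw, zero_add]
        _ = ∑ j ∈ Finset.univ.erase w, (-(sgn σ w)) * g j := by
            apply Finset.sum_congr rfl
            intro j hjmem
            have hjw : j ≠ w := (Finset.mem_erase.mp hjmem).1
            by_cases hc : j.1 < ℓ + 2 ∧ σ j = true
            · rw [if_pos hc, kw_some _ _ _ w ((hvt σ j hc.1).trans hw)]
              have hd : dnc σ j w = false := by
                rw [dnc_other σ j w (Ne.symm hjw)]; exact hwf
              rw [if_pos hd, hg]
              simp only
              have hgj : upc σ w j = true := by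
                rw [upc_other σ w j hjw]; exact hc.2
              rw [if_pos ⟨hc.1, hgj⟩, dnc_upc_comm σ j w hjw]
              have hsp := sgn_prod σ j w hjw hc.2 hwf
              rw [dnc_upc_comm σ j w hjw] at hsp
              linear_combination (F (upc (dnc σ j) w)) * hsp
            · rw [if_neg hc, hg]
              simp only
              rw [if_neg]
              · ring
              · rw [upc_other σ w j hjw]
                exact hc
        _ = (-(sgn σ w)) * ∑ j ∈ Finset.univ.erase w, g j := by rw [Finset.mul_sum]
        _ = (-(sgn σ w)) * (-(sgn σ w * F σ)) := by rw [hrest]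
        _ = (sgn σ w * sgn σ w) * F σ := by ring
        _ = F σ := by rw [sgn_sq, one_mul]
    rw [hqk]; ring

lemma gen_c (OKN : Config N → Prop) (vt : Config N → Option (Fin N))
    (hvt : ∀ (σ : Config N) (i : Fin N), i.1 < ℓ + 2 → vt (dnc σ i) = vt σ)
    (F : Config N → ℂ) (σ : Config N) (hσ : OKN σ) (w : Fin N) (hw : vt σ = some w)
    (hF0 : F σ = 0)
    (hz : ∀ i : Fin N, i.1 < ℓ + 2 → σ i = true → dnc σ i w = false →
      F (upc (dnc σ i) w) = 0) :
    STG ℓ N OKN vt F σ = 0 := by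
  rw [stg_eq ℓ OKN vt F σ hσ, hF0]
  have hqk : QW ℓ N (KW N vt F) σ = 0 := by
    unfold QW
    apply Finset.sum_eq_zero
    intro i _
    by_cases hc : i.1 < ℓ + 2 ∧ σ i = true
    · rw [if_pos hc, kw_some _ _ _ w ((hvt σ i hc.1).trans hw)]
      by_cases hd : dnc σ i w = false
      · rw [if_pos hd, hz i hc.1 hc.2 hd, mul_zero, mul_zero]
      · rw [if_neg hd, mul_zero]
    · rw [if_neg hc]
  rw [hqk]
  ring

lemma stg_none' (OKN : Config N → Prop) (vt : Config N → Option (Fin N))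
    (hvt : ∀ (σ : Config N) (i : Fin N), i.1 < ℓ + 2 → vt (dnc σ i) = vt σ)
    (F : Config N → ℂ) (σ : Config N) (hσ : OKN σ) (hn : vt σ = none) :
    STG ℓ N OKN vt F σ = F σ := by
  rw [stg_eq ℓ OKN vt F σ hσ]
  have hqk : QW ℓ N (KW N vt F) σ = 0 := by
    unfold QW
    apply Finset.sum_eq_zero
    intro i _
    by_cases hc : i.1 < ℓ + 2 ∧ σ i = true
    · rw [if_pos hc, kw_none _ _ _ ((hvt σ i hc.1).trans hn), mul_zero]
    · rw [if_neg hc]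
  rw [hqk]
  ring

lemma stg_coc (OKN : Config N → Prop)
    (hdn : ∀ (σ : Config N) (i : Fin N), i.1 < ℓ + 2 → OKN σ → OKN (dnc σ i))
    (vt : Config N → Option (Fin N)) (F : Config N → ℂ)
    (hcoc : ∀ σ, OKN σ → QW ℓ N F σ = 0) (σ : Config N) (hσ : OKN σ) :
    QW ℓ N (STG ℓ N OKN vt F) σ = 0 := by
  have h1 : QW ℓ N (STG ℓ N OKN vt F) σ
      = QW ℓ N (fun μ => F μ - QW ℓ N (KW N vt F) μ) σ := by
    apply QW_congr
    intro i hi ht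
    unfold STG
    rw [if_pos (hdn σ i hi hσ)]
  rw [h1, QW_sub ℓ F (fun μ => QW ℓ N (KW N vt F) μ) σ, hcoc σ hσ,
    qq_zero ℓ (KW N vt F) σ]
  ring

lemma stg_grade (OKN : Config N → Prop) (vt : Config N → Option (Fin N))
    (F : Config N → ℂ) (f : ℕ) (hf : ∀ σ, F σ ≠ 0 → fermions σ = f) :
    ∀ σ, STG ℓ N OKN vt F σ ≠ 0 → fermions σ = f := by
  intro σ hne
  by_contra hff
  apply hne
  unfold STG
  split
  · rw [show F σ = 0 from by_contra fun h => hff (hf σ h)]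
    have hqk : QW ℓ N (KW N vt F) σ = 0 := by
      unfold QW
      apply Finset.sum_eq_zero
      intro i _
      by_cases hc : i.1 < ℓ + 2 ∧ σ i = true
      · rw [if_pos hc]
        cases hv : vt (dnc σ i) with
        | none => rw [kw_none _ _ _ hv, mul_zero]
        | some w =>
          rw [kw_some _ _ _ w hv]
          by_cases hd : dnc σ i w = false
          · rw [if_pos hd]
            have hF : F (upc (dnc σ i) w) = 0 := by
              by_contra hFne
              apply hff
              rw [← hf _ hFne, fermions_upc _ _ hd, ← fermions_dnc σ i hc.2]
            rw [hF, mul_zero, mul_zero]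
          · rw [if_neg hd, mul_zero]
      · rw [if_neg hc]
    rw [hqk]
    ring
  · rfl

lemma kw_grade (vt : Config N → Option (Fin N)) (F : Config N → ℂ) (f : ℕ)
    (hf : ∀ σ, F σ ≠ 0 → fermions σ = f) :
    ∀ μ, KW N vt F μ ≠ 0 → fermions μ + 1 = f := by
  intro μ h
  unfold KW at h
  cases hv : vt μ with
  | none => rw [hv] at h; exact absurd rfl h
  | some w =>
    rw [hv] at h
    simp only [Option.elim] at h
    by_cases hd : μ w = false
    · rw [if_pos hd] at h
      have hF : F (upc μ w) ≠ 0 := fun hF => h (by rw [hF, mul_zero])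
      rw [← hf _ hF, fermions_upc μ w hd]
    · rw [if_neg hd] at h
      exact absurd rfl h

end oplemmas

/-! ### the core setting: an abstract characterization of the allowed configurations -/

section core

variable (ℓ Nt : ℕ)

def tl (σ : Config (Nt + (ℓ + 2))) : Config Nt :=
  fun j => σ ⟨ℓ + 2 + j.1, by omega⟩

def hitA (aOf : Config Nt → ℕ) (σ : Config (Nt + (ℓ + 2))) : Prop :=
  ∃ i : Fin (Nt + (ℓ + 2)), i.1 ≤ aOf (tl ℓ Nt σ) ∧ σ i = false

def hitB (bOf : Config Nt → ℕ) (σ : Config (Nt + (ℓ + 2))) : Prop :=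
  ∃ i : Fin (Nt + (ℓ + 2)), ℓ + 1 - bOf (tl ℓ Nt σ) ≤ i.1 ∧ i.1 ≤ ℓ + 1 ∧ σ i = false

structure BCData where
  OKN : Config (Nt + (ℓ + 2)) → Prop
  OKt : Config Nt → Prop
  TOK : Config Nt → Prop
  aOf : Config Nt → ℕ
  bOf : Config Nt → ℕ
  hA : ∀ τ, aOf τ ≤ ℓ
  hB : ∀ τ, bOf τ ≤ ℓ
  hch : ∀ σ, OKN σ ↔ TOK (tl ℓ Nt σ) ∧ hitA ℓ Nt aOf σ ∧ hitB ℓ Nt bOf σ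
  hok : ∀ τ, OKt τ ↔ TOK τ ∧ ℓ ≤ aOf τ + bOf τ

variable {ℓ Nt}

lemma tl_update (σ : Config (Nt + (ℓ + 2))) (i : Fin (Nt + (ℓ + 2))) (hi : i.1 < ℓ + 2)
    (b : Bool) : tl ℓ Nt (Function.update σ i b) = tl ℓ Nt σ := by
  funext j
  unfold tl
  rw [Function.update_of_ne]
  intro h
  have : ℓ + 2 + j.1 = i.1 := congrArg Fin.val h
  omega

lemma tl_upc (σ : Config (Nt + (ℓ + 2))) (i : Fin (Nt + (ℓ + 2))) (hi : i.1 < ℓ + 2) :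
    tl ℓ Nt (upc σ i) = tl ℓ Nt σ := tl_update σ i hi true

lemma tl_dnc (σ : Config (Nt + (ℓ + 2))) (i : Fin (Nt + (ℓ + 2))) (hi : i.1 < ℓ + 2) :
    tl ℓ Nt (dnc σ i) = tl ℓ Nt σ := tl_update σ i hi false

variable (D : BCData ℓ Nt)

lemma okn_dnc (σ : Config (Nt + (ℓ + 2))) (i : Fin (Nt + (ℓ + 2))) (hi : i.1 < ℓ + 2)
    (h : D.OKN σ) : D.OKN (dnc σ i) := by
  rw [D.hch] at h ⊢
  unfold hitA hitB at h ⊢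
  rw [tl_dnc σ i hi]
  obtain ⟨h1, ⟨x, hx1, hx2⟩, ⟨y, hy1, hy2, hy3⟩⟩ := h
  refine ⟨h1, ⟨x, hx1, ?_⟩, ⟨y, hy1, hy2, ?_⟩⟩
  · by_cases hxi : x = i
    · subst hxi; exact dnc_self σ x
    · rw [dnc_other σ i x hxi]; exact hx2
  · by_cases hyi : y = i
    · subst hyi; exact dnc_self σ y
    · rw [dnc_other σ i y hyi]; exact hy3

/-! ### the three stage selectors -/

def w0 : Fin (Nt + (ℓ + 2)) := ⟨0, by omega⟩
def w1 : Fin (Nt + (ℓ + 2)) := ⟨ℓ + 1, by omega⟩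

def vt0 : Config (Nt + (ℓ + 2)) → Option (Fin (Nt + (ℓ + 2))) := fun _ => some w0
def vt1 : Config (Nt + (ℓ + 2)) → Option (Fin (Nt + (ℓ + 2))) := fun _ => some w1

def vt2 : Config (Nt + (ℓ + 2)) → Option (Fin (Nt + (ℓ + 2))) := fun σ =>
  if ℓ ≤ D.aOf (tl ℓ Nt σ) + D.bOf (tl ℓ Nt σ) then none
  else some ⟨min (D.aOf (tl ℓ Nt σ) + 1) (ℓ + 1), by omega⟩

lemma hvt0 : ∀ (σ : Config (Nt + (ℓ + 2))) (i : Fin (Nt + (ℓ + 2))), i.1 < ℓ + 2 →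
    vt0 (dnc σ i) = vt0 σ := fun _ _ _ => rfl

lemma hvt1 : ∀ (σ : Config (Nt + (ℓ + 2))) (i : Fin (Nt + (ℓ + 2))), i.1 < ℓ + 2 →
    vt1 (dnc σ i) = vt1 σ := fun _ _ _ => rfl

lemma hvt2 : ∀ (σ : Config (Nt + (ℓ + 2))) (i : Fin (Nt + (ℓ + 2))), i.1 < ℓ + 2 →
    vt2 D (dnc σ i) = vt2 D σ := by
  intro σ i hi
  exact congrArg (fun τ => if ℓ ≤ D.aOf τ + D.bOf τ then none
    else some (⟨min (D.aOf τ + 1) (ℓ + 1), by omega⟩ : Fin (Nt + (ℓ + 2)))) (tl_dnc σ i hi)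

lemma vt2_none (σ : Config (Nt + (ℓ + 2)))
    (h : ℓ ≤ D.aOf (tl ℓ Nt σ) + D.bOf (tl ℓ Nt σ)) : vt2 D σ = none := if_pos h

lemma vt2_some (σ : Config (Nt + (ℓ + 2)))
    (h : ¬ ℓ ≤ D.aOf (tl ℓ Nt σ) + D.bOf (tl ℓ Nt σ)) :
    vt2 D σ = some ⟨D.aOf (tl ℓ Nt σ) + 1, by have := D.hA (tl ℓ Nt σ); omega⟩ := by
  unfold vt2
  rw [if_neg h]
  congr 1
  apply Fin.ext
  show min (D.aOf (tl ℓ Nt σ) + 1) (ℓ + 1) = D.aOf (tl ℓ Nt σ) + 1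
  have := D.hA (tl ℓ Nt σ)
  omega

/-! ### critical sets -/

def T0 (σ : Config (Nt + (ℓ + 2))) : Prop := σ w0 = false ∧ ¬ D.OKN (upc σ w0)
def T1 (σ : Config (Nt + (ℓ + 2))) : Prop := σ w1 = false ∧ ¬ D.OKN (upc σ w1)

lemma not_T0 (σ : Config (Nt + (ℓ + 2))) (h : ¬ T0 D σ) :
    σ w0 = true ∨ D.OKN (upc σ w0) := by
  by_cases h1 : σ w0 = true
  · exact Or.inl h1
  · right
    by_contra h2
    exact h ⟨by cases hh : σ w0; rfl; exact absurd hh h1, h2⟩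

lemma not_T1 (σ : Config (Nt + (ℓ + 2))) (h : ¬ T1 D σ) :
    σ w1 = true ∨ D.OKN (upc σ w1) := by
  by_cases h1 : σ w1 = true
  · exact Or.inl h1
  · right
    by_contra h2
    exact h ⟨by cases hh : σ w1; rfl; exact absurd hh h1, h2⟩

end core

section core2

variable {ℓ Nt : ℕ} (D : BCData ℓ Nt)

lemma w0_lt : (w0 : Fin (Nt + (ℓ + 2))).1 < ℓ + 2 := by
  show 0 < ℓ + 2; omega

lemma w1_lt : (w1 : Fin (Nt + (ℓ + 2))).1 < ℓ + 2 := by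
  show ℓ + 1 < ℓ + 2; omega

lemma w0_ne_w1 : (w0 : Fin (Nt + (ℓ + 2))) ≠ w1 := by
  intro h
  have := congrArg Fin.val h
  simp only [w0, w1] at this
  omega

lemma hdnD : ∀ (σ : Config (Nt + (ℓ + 2))) (i : Fin (Nt + (ℓ + 2))), i.1 < ℓ + 2 →
    D.OKN σ → D.OKN (dnc σ i) := fun σ i hi h => okn_dnc D σ i hi h

/-- Stage 0 support: the result is supported on `T0`. -/
lemma s0 (F : Config (Nt + (ℓ + 2)) → ℂ)
    (hco : ∀ σ, D.OKN σ → QW ℓ (Nt + (ℓ + 2)) F σ = 0)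
    (σ : Config (Nt + (ℓ + 2))) (hσ : D.OKN σ) (h : ¬ T0 D σ) :
    STG ℓ (Nt + (ℓ + 2)) D.OKN vt0 F σ = 0 :=
  gen_a ℓ D.OKN vt0 hvt0 F hco σ hσ w0 rfl w0_lt (not_T0 D σ h)

/-- Closure for stage 1. -/
lemma cl1 (σ : Config (Nt + (ℓ + 2))) (hσ : D.OKN σ) (hn : ¬ T0 D σ)
    (i : Fin (Nt + (ℓ + 2))) (hi : i.1 < ℓ + 2) (hit : σ i = true)
    (hok' : D.OKN (upc (dnc σ i) w1)) : ¬ T0 D (upc (dnc σ i) w1) := by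
  rintro ⟨hf0, hnok⟩
  apply hnok
  rw [D.hch]
  unfold hitA hitB
  rw [tl_upc _ w0 w0_lt, tl_upc _ w1 w1_lt, tl_dnc σ i hi]
  have hchs := (D.hch σ).mp hσ
  unfold hitA hitB at hchs
  refine ⟨hchs.1, ?_, ?_⟩
  · -- hitA
    rcases not_T0 D σ hn with hw0t | hok0
    · obtain ⟨x, hx1, hx2⟩ := hchs.2.1
      have hxw0 : x ≠ w0 := fun h => by rw [h, hw0t] at hx2; simp at hx2
      have hxw1 : x ≠ w1 := fun h => by
        rw [h] at hx1
        have := D.hA (tl ℓ Nt σ)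
        have hv : (w1 : Fin (Nt + (ℓ + 2))).1 = ℓ + 1 := rfl
        omega
      have hxi : x ≠ i := fun h => by rw [h, hit] at hx2; simp at hx2
      exact ⟨x, hx1, by
        rw [upc_other _ w0 x hxw0, upc_other _ w1 x hxw1, dnc_other σ i x hxi]; exact hx2⟩
    · have hch0 := (D.hch _).mp hok0
      unfold hitA at hch0
      rw [tl_upc σ w0 w0_lt] at hch0
      obtain ⟨x, hx1, hx2⟩ := hch0.2.1
      have hxw0 : x ≠ w0 := fun h => by rw [h, upc_self] at hx2; simp at hx2
      have hx2' : σ x = false := by rwa [upc_other σ w0 x hxw0] at hx2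
      have hxw1 : x ≠ w1 := fun h => by
        rw [h] at hx1
        have := D.hA (tl ℓ Nt σ)
        have hv : (w1 : Fin (Nt + (ℓ + 2))).1 = ℓ + 1 := rfl
        omega
      have hxi : x ≠ i := fun h => by rw [h, hit] at hx2'; simp at hx2'
      exact ⟨x, hx1, by
        rw [upc_other _ w0 x hxw0, upc_other _ w1 x hxw1, dnc_other σ i x hxi]; exact hx2'⟩
  · -- hitB from hok'
    have hcht' := (D.hch _).mp hok'
    unfold hitB at hcht'
    rw [tl_upc _ w1 w1_lt, tl_dnc σ i hi] at hcht'
    obtain ⟨y, hy1, hy2, hy3⟩ := hcht'.2.2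
    have hyw0 : y ≠ w0 := by
      intro h
      have hbb := D.hB (tl ℓ Nt σ)
      rw [h] at hy1
      have hv : (w0 : Fin (Nt + (ℓ + 2))).1 = 0 := rfl
      omega
    exact ⟨y, hy1, hy2, by rw [upc_other _ w0 y hyw0]; exact hy3⟩

/-- Stage 1 support. -/
lemma s1 (F : Config (Nt + (ℓ + 2)) → ℂ)
    (hco : ∀ σ, D.OKN σ → QW ℓ (Nt + (ℓ + 2)) F σ = 0)
    (σ : Config (Nt + (ℓ + 2))) (hσ : D.OKN σ) (h : ¬ (T0 D σ ∧ T1 D σ)) :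
    STG ℓ (Nt + (ℓ + 2)) D.OKN vt1 (STG ℓ (Nt + (ℓ + 2)) D.OKN vt0 F) σ = 0 := by
  have hco0 : ∀ σ, D.OKN σ →
      QW ℓ (Nt + (ℓ + 2)) (STG ℓ (Nt + (ℓ + 2)) D.OKN vt0 F) σ = 0 :=
    fun σ hσ => stg_coc ℓ D.OKN (hdnD D) vt0 F hco σ hσ
  by_cases h1 : T1 D σ
  · have h0 : ¬ T0 D σ := fun ht0 => h ⟨ht0, h1⟩
    apply gen_c ℓ D.OKN vt1 hvt1 _ σ hσ w1 rfl
    · exact s0 D F hco σ hσ h0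
    · intro i hi hit _
      by_cases hok' : D.OKN (upc (dnc σ i) w1)
      · exact s0 D F hco _ hok' (cl1 D σ hσ h0 i hi hit hok')
      · exact stg_nok ℓ D.OKN vt0 F _ hok'
  · exact gen_a ℓ D.OKN vt1 hvt1 _ hco0 σ hσ w1 rfl w1_lt (not_T1 D σ h1)

/-- Closure for stage 2: in a sector without cohomology there are no critical states. -/
lemma cl2 (σ : Config (Nt + (ℓ + 2))) (hσ : D.OKN σ)
    (hnsec : ¬ ℓ ≤ D.aOf (tl ℓ Nt σ) + D.bOf (tl ℓ Nt σ))
    (w : Fin (Nt + (ℓ + 2))) (hwv : w.1 = D.aOf (tl ℓ Nt σ) + 1) :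
    D.OKN (upc σ w) := by
  rw [D.hch]
  unfold hitA hitB
  rw [tl_upc σ w (by have := D.hA (tl ℓ Nt σ); omega)]
  have hchs := (D.hch σ).mp hσ
  unfold hitA hitB at hchs
  obtain ⟨hTOK, ⟨x, hx1, hx2⟩, ⟨y, hy1, hy2, hy3⟩⟩ := hchs
  have hxw : x ≠ w := fun h => by rw [h] at hx1; omega
  have hyw : y ≠ w := by
    intro h
    have hbb := D.hB (tl ℓ Nt σ)
    rw [h] at hy1
    omega
  exact ⟨hTOK, ⟨x, hx1, by rw [upc_other σ w x hxw]; exact hx2⟩,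
    ⟨y, hy1, hy2, by rw [upc_other σ w y hyw]; exact hy3⟩⟩

/-- Stage 2 support. -/
lemma s2 (F : Config (Nt + (ℓ + 2)) → ℂ)
    (hco : ∀ σ, D.OKN σ → QW ℓ (Nt + (ℓ + 2)) F σ = 0)
    (σ : Config (Nt + (ℓ + 2))) (hσ : D.OKN σ)
    (h : ¬ (T0 D σ ∧ T1 D σ ∧ ℓ ≤ D.aOf (tl ℓ Nt σ) + D.bOf (tl ℓ Nt σ))) :
    STG ℓ (Nt + (ℓ + 2)) D.OKN (vt2 D)
      (STG ℓ (Nt + (ℓ + 2)) D.OKN vt1 (STG ℓ (Nt + (ℓ + 2)) D.OKN vt0 F)) σ = 0 := by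
  have hco0 : ∀ σ, D.OKN σ →
      QW ℓ (Nt + (ℓ + 2)) (STG ℓ (Nt + (ℓ + 2)) D.OKN vt0 F) σ = 0 :=
    fun σ hσ => stg_coc ℓ D.OKN (hdnD D) vt0 F hco σ hσ
  have hco1 : ∀ σ, D.OKN σ →
      QW ℓ (Nt + (ℓ + 2)) (STG ℓ (Nt + (ℓ + 2)) D.OKN vt1
        (STG ℓ (Nt + (ℓ + 2)) D.OKN vt0 F)) σ = 0 :=
    fun σ hσ => stg_coc ℓ D.OKN (hdnD D) vt1 _ hco0 σ hσ
  by_cases hsec : ℓ ≤ D.aOf (tl ℓ Nt σ) + D.bOf (tl ℓ Nt σ)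
  · rw [stg_none' ℓ D.OKN (vt2 D) (hvt2 D) _ σ hσ (vt2_none D σ hsec)]
    exact s1 D F hco σ hσ (fun hc => h ⟨hc.1, hc.2, hsec⟩)
  · apply gen_a ℓ D.OKN (vt2 D) (hvt2 D) _ hco1 σ hσ
      ⟨D.aOf (tl ℓ Nt σ) + 1, by have := D.hA (tl ℓ Nt σ); omega⟩
      (vt2_some D σ hsec) (by have := D.hA (tl ℓ Nt σ); show D.aOf (tl ℓ Nt σ) + 1 < ℓ + 2; omega)
    by_cases hwt : σ ⟨D.aOf (tl ℓ Nt σ) + 1, by have := D.hA (tl ℓ Nt σ); omega⟩ = true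
    · exact Or.inl hwt
    · exact Or.inr (cl2 D σ hσ hsec _ rfl)

/-- On the triple-critical set, the configuration is `χ` glued to an allowed tail. -/
lemma final_supp (σ : Config (Nt + (ℓ + 2))) (hσ : D.OKN σ) (h0 : T0 D σ) (h1 : T1 D σ)
    (hsec : ℓ ≤ D.aOf (tl ℓ Nt σ) + D.bOf (tl ℓ Nt σ)) :
    σ = glue ℓ Nt (tl ℓ Nt σ) ∧ D.OKt (tl ℓ Nt σ) := by
  have hTOK := ((D.hch σ).mp hσ).1
  have hv0 : (w0 : Fin (Nt + (ℓ + 2))).1 = 0 := rfl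
  have hv1 : (w1 : Fin (Nt + (ℓ + 2))).1 = ℓ + 1 := rfl
  have hblock : ∀ i : Fin (Nt + (ℓ + 2)), i.1 < ℓ + 2 →
      σ i = decide (1 ≤ i.1 ∧ i.1 ≤ ℓ) := by
    intro i hi
    by_cases hi0 : i.1 = 0
    · have hiw : i = w0 := Fin.ext (by rw [hv0]; exact hi0)
      rw [hiw, h0.1]
      symm
      apply decide_eq_false
      rintro ⟨ha, _⟩
      omega
    · by_cases hi1 : i.1 = ℓ + 1
      · have hiw : i = w1 := Fin.ext (by rw [hv1]; exact hi1)
        rw [hiw, h1.1]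
        symm
        apply decide_eq_false
        rintro ⟨_, ha⟩
        omega
      · -- 1 ≤ i ≤ ℓ : occupied
        have hd : decide (1 ≤ i.1 ∧ i.1 ≤ ℓ) = true := by
          apply decide_eq_true; omega
        rw [hd]
        by_contra hne
        have hif : σ i = false := by cases hh : σ i; rfl; exact absurd hh hne
        have hA := D.hA (tl ℓ Nt σ)
        have hB := D.hB (tl ℓ Nt σ)
        by_cases hcase : i.1 ≤ D.aOf (tl ℓ Nt σ)
        · apply h0.2
          rw [D.hch]
          unfold hitA hitB
          rw [tl_upc σ w0 w0_lt]
          refine ⟨hTOK, ⟨i, hcase, ?_⟩, ⟨w1, ?_, ?_, ?_⟩⟩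
          · rw [upc_other σ w0 i (Fin.ne_of_val_ne (by rw [hv0]; exact hi0))]
            exact hif
          · omega
          · omega
          · rw [upc_other σ w0 w1 (Ne.symm w0_ne_w1)]
            exact h1.1
        · apply h1.2
          rw [D.hch]
          unfold hitA hitB
          rw [tl_upc σ w1 w1_lt]
          refine ⟨hTOK, ⟨w0, by omega, ?_⟩, ⟨i, by omega, by omega, ?_⟩⟩
          · rw [upc_other σ w1 w0 w0_ne_w1]
            exact h0.1
          · rw [upc_other σ w1 i (Fin.ne_of_val_ne (by rw [hv1]; exact hi1))]
            exact hif
  constructor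
  · funext i
    unfold glue
    by_cases hi : i.1 < ℓ + 2
    · rw [dif_pos hi]
      exact hblock i hi
    · rw [dif_neg hi]
      unfold tl
      congr 1
      apply Fin.ext
      show i.1 = ℓ + 2 + (i.1 - (ℓ + 2))
      omega
  · rw [D.hok]
    exact ⟨hTOK, hsec⟩

/-! ### glue lemmas -/

lemma tl_glue (τ : Config Nt) : tl ℓ Nt (glue ℓ Nt τ) = τ := by
  funext j
  unfold tl glue
  rw [dif_neg (by show ¬ (ℓ + 2 + j.1 < ℓ + 2); omega)]
  congr 1
  apply Fin.ext
  show ℓ + 2 + j.1 - (ℓ + 2) = j.1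
  omega

lemma glue_inj (τ1 τ2 : Config Nt) (h : glue ℓ Nt τ1 = glue ℓ Nt τ2) : τ1 = τ2 := by
  have := congrArg (tl ℓ Nt) h
  rwa [tl_glue, tl_glue] at this

lemma okn_glue (τ : Config Nt) : D.OKN (glue ℓ Nt τ) ↔ D.TOK τ := by
  rw [D.hch]
  unfold hitA hitB
  rw [tl_glue]
  constructor
  · exact fun h => h.1
  · intro h
    have hv0 : (w0 : Fin (Nt + (ℓ + 2))).1 = 0 := rfl
    have hv1 : (w1 : Fin (Nt + (ℓ + 2))).1 = ℓ + 1 := rfl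
    refine ⟨h, ⟨w0, by omega, ?_⟩, ⟨w1, by omega, by omega, ?_⟩⟩
    · unfold glue
      rw [dif_pos w0_lt]
      apply decide_eq_false
      rintro ⟨ha, _⟩
      omega
    · unfold glue
      rw [dif_pos w1_lt]
      apply decide_eq_false
      rintro ⟨_, ha⟩
      omega

lemma okt_glue (τ : Config Nt) (h : D.OKt τ) : D.OKN (glue ℓ Nt τ) :=
  (okn_glue D τ).mpr ((D.hok τ).mp h).1


lemma fermions_sum {n : ℕ} (σ : Config n) :
    fermions σ = ∑ k ∈ Finset.range n,
      (if h : k < n then (if σ ⟨k, h⟩ = true then 1 else 0) else 0) := by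
  unfold fermions
  rw [Finset.card_filter,
    ← Fin.sum_univ_eq_sum_range
      (fun k => if h : k < n then (if σ ⟨k, h⟩ = true then 1 else 0) else 0) n]
  apply Finset.sum_congr rfl
  intro i _
  rw [dif_pos i.isLt, Fin.eta]

lemma fermions_glue (τ : Config Nt) : fermions (glue ℓ Nt τ) = ℓ + fermions τ := by
  rw [fermions_sum (glue ℓ Nt τ), fermions_sum τ]
  set f : ℕ → ℕ := fun k => if h : k < Nt + (ℓ + 2) then
    (if glue ℓ Nt τ ⟨k, h⟩ = true then 1 else 0) else 0 with hf
  have hsplit : ∑ k ∈ Finset.range (Nt + (ℓ + 2)), f k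
      = (∑ k ∈ Finset.Ico 0 (ℓ + 2), f k) + ∑ k ∈ Finset.Ico (ℓ + 2) (Nt + (ℓ + 2)), f k := by
    rw [Finset.range_eq_Ico]
    exact (Finset.sum_Ico_consecutive f (by omega) (by omega)).symm
  rw [hsplit]
  congr 1
  · -- block part sums to ℓ
    have hcongr : ∀ k ∈ Finset.Ico 0 (ℓ + 2), f k = if 1 ≤ k ∧ k ≤ ℓ then 1 else 0 := by
      intro k hk
      rw [Finset.mem_Ico] at hk
      rw [hf]
      simp only
      rw [dif_pos (by omega : k < Nt + (ℓ + 2))]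
      unfold glue
      rw [dif_pos (by show k < ℓ + 2; omega)]
      by_cases hc : 1 ≤ k ∧ k ≤ ℓ
      · rw [if_pos hc, if_pos (by simpa using hc)]
      · rw [if_neg hc, if_neg (by simpa using hc)]
    rw [Finset.sum_congr rfl hcongr, ← Finset.card_filter]
    have : Finset.filter (fun k => 1 ≤ k ∧ k ≤ ℓ) (Finset.Ico 0 (ℓ + 2))
        = Finset.Ico 1 (ℓ + 1) := by
      ext k
      simp only [Finset.mem_filter, Finset.mem_Ico]
      omega
    rw [this, Nat.card_Ico]
    omega
  · -- tail part
    rw [Finset.sum_Ico_eq_sum_range]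
    have hNt : Nt + (ℓ + 2) - (ℓ + 2) = Nt := by omega
    rw [hNt]
    apply Finset.sum_congr rfl
    intro i hi
    rw [Finset.mem_range] at hi
    rw [hf]
    simp only
    rw [dif_pos (by omega : ℓ + 2 + i < Nt + (ℓ + 2)), dif_pos hi]
    unfold glue
    rw [dif_neg (by show ¬ (ℓ + 2 + i < ℓ + 2); omega)]
    congr 2
    exact congrArg τ (Fin.ext (by show ℓ + 2 + i - (ℓ + 2) = i; omega))

lemma mem_gradeV {n : ℕ} (OK : Config n → Prop) (f : ℕ) (ψ : AState n OK) :
    ψ ∈ gradeV n OK f ↔ ∀ σ : {σ : Config n // OK σ}, fermions σ.1 ≠ f → ψ σ = 0 :=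
  Iff.rfl

lemma glue_T0 (τ : Config Nt) (h : D.OKt τ) : T0 D (glue ℓ Nt τ) := by
  have hv0 : (w0 : Fin (Nt + (ℓ + 2))).1 = 0 := rfl
  constructor
  · unfold glue
    rw [dif_pos w0_lt]
    apply decide_eq_false
    rintro ⟨ha, _⟩
    omega
  · intro hok
    rw [D.hch] at hok
    obtain ⟨_, hA', _⟩ := hok
    unfold hitA at hA'
    rw [tl_upc _ w0 w0_lt, tl_glue] at hA'
    obtain ⟨x, hx1, hx2⟩ := hA'
    have hxw0 : x ≠ w0 := fun hh => by rw [hh, upc_self] at hx2; simp at hx2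
    have hx0 : 1 ≤ x.1 := by
      rcases Nat.eq_zero_or_pos x.1 with h0 | h0
      · exact absurd (Fin.ext (by rw [hv0]; exact h0)) hxw0
      · exact h0
    rw [upc_other _ w0 x hxw0] at hx2
    have hxb : x.1 < ℓ + 2 := by
      have := D.hA τ
      omega
    unfold glue at hx2
    rw [dif_pos hxb] at hx2
    have : decide (1 ≤ x.1 ∧ x.1 ≤ ℓ) = true := by
      apply decide_eq_true
      have := D.hA τ
      omega
    rw [this] at hx2
    simp at hx2

lemma glue_T1 (τ : Config Nt) (h : D.OKt τ) : T1 D (glue ℓ Nt τ) := by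
  have hv1 : (w1 : Fin (Nt + (ℓ + 2))).1 = ℓ + 1 := rfl
  constructor
  · unfold glue
    rw [dif_pos w1_lt]
    apply decide_eq_false
    rintro ⟨_, ha⟩
    omega
  · intro hok
    rw [D.hch] at hok
    obtain ⟨_, _, hB'⟩ := hok
    unfold hitB at hB'
    rw [tl_upc _ w1 w1_lt, tl_glue] at hB'
    obtain ⟨y, hy1, hy2, hy3⟩ := hB'
    have hyw1 : y ≠ w1 := fun hh => by rw [hh, upc_self] at hy3; simp at hy3
    have hyl : y.1 ≤ ℓ := by
      rcases Nat.lt_or_ge y.1 (ℓ + 1) with h0 | h0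
      · omega
      · exact absurd (Fin.ext (by rw [hv1]; omega)) hyw1
    rw [upc_other _ w1 y hyw1] at hy3
    unfold glue at hy3
    rw [dif_pos (by omega : y.1 < ℓ + 2)] at hy3
    have : decide (1 ≤ y.1 ∧ y.1 ≤ ℓ) = true := by
      apply decide_eq_true
      have := D.hB τ
      have hsec := ((D.hok τ).mp h).2
      omega
    rw [this] at hy3
    simp at hy3

lemma glue_SEC (τ : Config Nt) (h : D.OKt τ) :
    ℓ ≤ D.aOf (tl ℓ Nt (glue ℓ Nt τ)) + D.bOf (tl ℓ Nt (glue ℓ Nt τ)) := by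
  rw [tl_glue]
  exact ((D.hok τ).mp h).2


/-! ### the main core theorem -/

theorem core_main {ℓ Nt : ℕ} (D : BCData ℓ Nt) :
    (∀ f, f < ℓ → cohDim (Nt + (ℓ + 2)) D.OKN (S1 (Nt + (ℓ + 2)) ℓ) f = 0) ∧
    (∀ f, ℓ ≤ f → ∀ ψ : AState (Nt + (ℓ + 2)) D.OKN,
      Qop (Nt + (ℓ + 2)) D.OKN (S1 (Nt + (ℓ + 2)) ℓ) ψ = 0 →
      ψ ∈ gradeV (Nt + (ℓ + 2)) D.OKN f →
      ∃ ψ' : AState Nt D.OKt, ψ' ∈ gradeV Nt D.OKt (f - ℓ) ∧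
        ψ - Gop ℓ Nt D.OKN D.OKt ψ' ∈
          (gradeV (Nt + (ℓ + 2)) D.OKN (f - 1)).map
            (Qop (Nt + (ℓ + 2)) D.OKN (S1 (Nt + (ℓ + 2)) ℓ)) ∧
        (ψ ∉ (gradeV (Nt + (ℓ + 2)) D.OKN (f - 1)).map
            (Qop (Nt + (ℓ + 2)) D.OKN (S1 (Nt + (ℓ + 2)) ℓ)) → ψ' ≠ 0)) := by
  -- the general construction, for any degree f
  have main : ∀ (f : ℕ) (ψ : AState (Nt + (ℓ + 2)) D.OKN),
      Qop (Nt + (ℓ + 2)) D.OKN (S1 (Nt + (ℓ + 2)) ℓ) ψ = 0 →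
      ψ ∈ gradeV (Nt + (ℓ + 2)) D.OKN f →
      ∃ (η : AState (Nt + (ℓ + 2)) D.OKN) (ψ' : AState Nt D.OKt),
        η ∈ gradeV (Nt + (ℓ + 2)) D.OKN (f - 1) ∧
        ψ' ∈ gradeV Nt D.OKt (f - ℓ) ∧
        Qop (Nt + (ℓ + 2)) D.OKN (S1 (Nt + (ℓ + 2)) ℓ) η
          = ψ - Gop ℓ Nt D.OKN D.OKt ψ' ∧
        (f < ℓ → ψ' = 0) := by
    intro f ψ hQ hg
    set F : Config (Nt + (ℓ + 2)) → ℂ := xt (Nt + (ℓ + 2)) D.OKN ψ with hF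
    have hco : ∀ σ, D.OKN σ → QW ℓ (Nt + (ℓ + 2)) F σ = 0 := by
      intro σ h
      have h2 := congrFun hQ ⟨σ, h⟩
      rw [qop_eq ℓ ψ σ h] at h2
      exact h2
    set F0 := STG ℓ (Nt + (ℓ + 2)) D.OKN vt0 F with hF0
    set F1 := STG ℓ (Nt + (ℓ + 2)) D.OKN vt1 F0 with hF1
    set F2 := STG ℓ (Nt + (ℓ + 2)) D.OKN (vt2 D) F1 with hF2
    have hgF : ∀ σ, F σ ≠ 0 → fermions σ = f := by
      intro σ h
      rw [hF] at h
      unfold xt at h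
      by_cases hok : D.OKN σ
      · rw [dif_pos hok] at h
        by_contra hne
        exact h (hg ⟨σ, hok⟩ hne)
      · rw [dif_neg hok] at h
        exact absurd rfl h
    have hgF0 := stg_grade ℓ D.OKN vt0 F f hgF
    have hgF1 := stg_grade ℓ D.OKN vt1 F0 f hgF0
    have hgF2 := stg_grade ℓ D.OKN (vt2 D) F1 f hgF1
    have hco0 : ∀ σ, D.OKN σ → QW ℓ (Nt + (ℓ + 2)) F0 σ = 0 :=
      fun σ hσ => stg_coc ℓ D.OKN (hdnD D) vt0 F hco σ hσ
    have hco1 : ∀ σ, D.OKN σ → QW ℓ (Nt + (ℓ + 2)) F1 σ = 0 :=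
      fun σ hσ => stg_coc ℓ D.OKN (hdnD D) vt1 F0 hco0 σ hσ
    -- the homotopy state and the residual state
    set η : AState (Nt + (ℓ + 2)) D.OKN := fun μ =>
      KW (Nt + (ℓ + 2)) vt0 F μ.1 + KW (Nt + (ℓ + 2)) vt1 F0 μ.1
        + KW (Nt + (ℓ + 2)) (vt2 D) F1 μ.1 with hη
    set ψ' : AState Nt D.OKt := fun τ => F2 (glue ℓ Nt τ.1) with hψ'
    -- support of F2
    have hsupp : ∀ σ (hσ : D.OKN σ), F2 σ ≠ 0 →
        σ = glue ℓ Nt (tl ℓ Nt σ) ∧ D.OKt (tl ℓ Nt σ) := by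
      intro σ hσ hne
      by_cases hcrit : T0 D σ ∧ T1 D σ ∧ ℓ ≤ D.aOf (tl ℓ Nt σ) + D.bOf (tl ℓ Nt σ)
      · exact final_supp D σ hσ hcrit.1 hcrit.2.1 hcrit.2.2
      · exact absurd (s2 D F hco σ hσ hcrit) hne
    -- G ψ' agrees with F2 on allowed configurations
    have hG : ∀ σ : {σ : Config (Nt + (ℓ + 2)) // D.OKN σ},
        Gop ℓ Nt D.OKN D.OKt ψ' σ = F2 σ.1 := by
      rintro ⟨σ, hσ⟩
      unfold Gop
      rw [Matrix.mulVecLin_apply]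
      unfold Matrix.mulVec dotProduct Gmat
      simp only
      by_cases hc : σ = glue ℓ Nt (tl ℓ Nt σ) ∧ D.OKt (tl ℓ Nt σ)
      · rw [Finset.sum_eq_single (⟨tl ℓ Nt σ, hc.2⟩ : {τ : Config Nt // D.OKt τ})]
        · rw [if_pos hc.1, one_mul, hψ']
          simp only
          rw [← hc.1]
        · rintro ⟨τ', hτ'⟩ _ hne
          rw [if_neg, zero_mul]
          intro heq
          apply hne
          apply Subtype.ext
          show τ' = tl ℓ Nt σ
          have h2 := congrArg (tl ℓ Nt) heq
          rw [tl_glue] at h2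
          exact h2.symm
        · intro hmem
          exact absurd (Finset.mem_univ _) hmem
      · have hF2z : F2 σ = 0 := by
          by_contra hne
          exact hc (hsupp σ hσ hne)
        rw [hF2z]
        apply Finset.sum_eq_zero
        rintro ⟨τ', hτ'⟩ _
        rw [if_neg, zero_mul]
        intro heq
        apply hc
        have htl : tl ℓ Nt σ = τ' := by rw [heq, tl_glue]
        rw [htl]
        exact ⟨heq, hτ'⟩
    -- Qop η = ψ - G ψ'
    have hmain : Qop (Nt + (ℓ + 2)) D.OKN (S1 (Nt + (ℓ + 2)) ℓ) η
        = ψ - Gop ℓ Nt D.OKN D.OKt ψ' := by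
      funext σ
      obtain ⟨σv, hσv⟩ := σ
      rw [Pi.sub_apply, qop_eq ℓ η σv hσv, hG ⟨σv, hσv⟩]
      have hxtη : ∀ i : Fin (Nt + (ℓ + 2)), i.1 < ℓ + 2 → σv i = true →
          xt (Nt + (ℓ + 2)) D.OKN η (dnc σv i)
            = (fun μ => KW (Nt + (ℓ + 2)) vt0 F μ + (KW (Nt + (ℓ + 2)) vt1 F0 μ
              + KW (Nt + (ℓ + 2)) (vt2 D) F1 μ)) (dnc σv i) := by
        intro i hi _
        unfold xt
        rw [dif_pos (okn_dnc D σv i hi hσv), hη]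
        simp only
        ring
      rw [show QW ℓ (Nt + (ℓ + 2)) (xt (Nt + (ℓ + 2)) D.OKN η) σv
          = QW ℓ (Nt + (ℓ + 2)) (fun μ => KW (Nt + (ℓ + 2)) vt0 F μ
            + (KW (Nt + (ℓ + 2)) vt1 F0 μ + KW (Nt + (ℓ + 2)) (vt2 D) F1 μ)) σv
          from QW_congr ℓ σv hxtη,
        QW_add ℓ (KW (Nt + (ℓ + 2)) vt0 F)
          (fun μ => KW (Nt + (ℓ + 2)) vt1 F0 μ + KW (Nt + (ℓ + 2)) (vt2 D) F1 μ) σv,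
        show QW ℓ (Nt + (ℓ + 2)) (fun μ => KW (Nt + (ℓ + 2)) vt1 F0 μ
            + KW (Nt + (ℓ + 2)) (vt2 D) F1 μ) σv
          = QW ℓ (Nt + (ℓ + 2)) (KW (Nt + (ℓ + 2)) vt1 F0) σv
            + QW ℓ (Nt + (ℓ + 2)) (KW (Nt + (ℓ + 2)) (vt2 D) F1) σv
          from QW_add ℓ (KW (Nt + (ℓ + 2)) vt1 F0) (KW (Nt + (ℓ + 2)) (vt2 D) F1) σv]
      have e2 : F2 σv = F1 σv - QW ℓ (Nt + (ℓ + 2)) (KW (Nt + (ℓ + 2)) (vt2 D) F1) σv :=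
        stg_eq ℓ D.OKN (vt2 D) F1 σv hσv
      have e1 : F1 σv = F0 σv - QW ℓ (Nt + (ℓ + 2)) (KW (Nt + (ℓ + 2)) vt1 F0) σv :=
        stg_eq ℓ D.OKN vt1 F0 σv hσv
      have e0 : F0 σv = F σv - QW ℓ (Nt + (ℓ + 2)) (KW (Nt + (ℓ + 2)) vt0 F) σv :=
        stg_eq ℓ D.OKN vt0 F σv hσv
      have eF : F σv = ψ ⟨σv, hσv⟩ := xt_ok ψ σv hσv
      rw [e2, e1, e0, eF]
      ring
    -- grading of η
    have hgη : η ∈ gradeV (Nt + (ℓ + 2)) D.OKN (f - 1) := by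
      rw [mem_gradeV]
      rintro ⟨μ, hμ⟩ hferm
      have e0 : KW (Nt + (ℓ + 2)) vt0 F μ = 0 := by
        by_contra h
        have hh := kw_grade vt0 F f hgF μ h
        exact absurd (by omega : fermions μ = f - 1) hferm
      have e1 : KW (Nt + (ℓ + 2)) vt1 F0 μ = 0 := by
        by_contra h
        have hh := kw_grade vt1 F0 f hgF0 μ h
        exact absurd (by omega : fermions μ = f - 1) hferm
      have e2 : KW (Nt + (ℓ + 2)) (vt2 D) F1 μ = 0 := by
        by_contra h
        have hh := kw_grade (vt2 D) F1 f hgF1 μ h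
        exact absurd (by omega : fermions μ = f - 1) hferm
      show KW (Nt + (ℓ + 2)) vt0 F μ + KW (Nt + (ℓ + 2)) vt1 F0 μ
        + KW (Nt + (ℓ + 2)) (vt2 D) F1 μ = 0
      rw [e0, e1, e2]
      ring
    -- grading of ψ'
    have hgψ' : ψ' ∈ gradeV Nt D.OKt (f - ℓ) := by
      rw [mem_gradeV]
      rintro ⟨τ, hτ⟩ hferm
      show F2 (glue ℓ Nt τ) = 0
      by_contra h
      have hh := hgF2 _ h
      rw [fermions_glue] at hh
      exact absurd (by omega : fermions τ = f - ℓ) hferm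
    refine ⟨η, ψ', hgη, hgψ', hmain, ?_⟩
    -- for f < ℓ the residue vanishes
    intro hf
    funext τ
    obtain ⟨τv, hτv⟩ := τ
    show F2 (glue ℓ Nt τv) = 0
    by_contra h
    have hh := hgF2 _ h
    rw [fermions_glue] at hh
    omega
  constructor
  · -- part (a)
    intro f hf
    have hsub : ∀ x : (cocycles (Nt + (ℓ + 2)) D.OKN (S1 (Nt + (ℓ + 2)) ℓ) f),
        (x : AState (Nt + (ℓ + 2)) D.OKN) ∈
          cobounds (Nt + (ℓ + 2)) D.OKN (S1 (Nt + (ℓ + 2)) ℓ) f := by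
      rintro ⟨ψ, hψ⟩
      rw [cocycles, Submodule.mem_inf] at hψ
      obtain ⟨hker, hgr⟩ := hψ
      rw [LinearMap.mem_ker] at hker
      obtain ⟨η, ψ', hgη, _, hmain, hzero⟩ := main f ψ hker hgr
      rw [hzero hf, map_zero, sub_zero] at hmain
      exact ⟨η, hgη, hmain⟩
    have htop : (cobounds (Nt + (ℓ + 2)) D.OKN (S1 (Nt + (ℓ + 2)) ℓ) f).comap
        (cocycles (Nt + (ℓ + 2)) D.OKN (S1 (Nt + (ℓ + 2)) ℓ) f).subtype = ⊤ := by
      rw [Submodule.eq_top_iff']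
      intro x
      rw [Submodule.mem_comap]
      exact hsub x
    unfold cohDim
    haveI : Subsingleton (CohSpace (Nt + (ℓ + 2)) D.OKN (S1 (Nt + (ℓ + 2)) ℓ) f) := by
      rw [Submodule.Quotient.subsingleton_iff]
      exact htop
    exact Module.finrank_zero_of_subsingleton
  · -- part (b)
    intro f _ ψ hQ hg
    obtain ⟨η, ψ', hgη, hgψ', hmain, _⟩ := main f ψ hQ hg
    refine ⟨ψ', hgψ', ⟨η, hgη, hmain⟩, ?_⟩
    intro hnot hz
    apply hnot
    rw [hz, map_zero, sub_zero] at hmain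
    exact ⟨η, hgη, hmain⟩

end core2

/-! ### first and last empty sites of the tail -/

section runs

variable {Nt : ℕ}

lemma e1_ex (τ : Config Nt) : ∃ k, k = Nt ∨ ∃ h : k < Nt, τ ⟨k, h⟩ = false :=
  ⟨Nt, Or.inl rfl⟩

def e1 (τ : Config Nt) : ℕ := Nat.find (e1_ex τ)

lemma e1_def (τ : Config Nt) : e1 τ = Nat.find (e1_ex τ) := rfl

lemma e1_le (τ : Config Nt) : e1 τ ≤ Nt := Nat.find_le (Or.inl rfl)

lemma e1_spec (τ : Config Nt) (h : e1 τ < Nt) : τ ⟨e1 τ, h⟩ = false := by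
  rcases Nat.find_spec (e1_ex τ) with hs | ⟨h', hs⟩
  · rw [e1_def] at h; omega
  · exact hs

lemma e1_min (τ : Config Nt) (k : ℕ) (hk : k < e1 τ) (hkN : k < Nt) : τ ⟨k, hkN⟩ = true := by
  rw [e1_def] at hk
  have hm := Nat.find_min (e1_ex τ) hk
  have h2 : ∀ h : k < Nt, τ ⟨k, h⟩ ≠ false := fun h hf => hm (Or.inr ⟨h, hf⟩)
  have h3 := h2 hkN
  cases hv : τ ⟨k, hkN⟩
  · exact absurd hv h3
  · rfl

lemma e1_le_of (τ : Config Nt) (k : ℕ) (hk : k < Nt) (hf : τ ⟨k, hk⟩ = false) :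
    e1 τ ≤ k := Nat.find_le (Or.inr ⟨hk, hf⟩)

def rev (τ : Config Nt) : Config Nt := fun j => τ ⟨Nt - 1 - j.1, by have := j.isLt; omega⟩

def e2 (τ : Config Nt) : ℕ := e1 (rev τ)

lemma e2_le (τ : Config Nt) : e2 τ ≤ Nt := e1_le _

lemma e2_spec (τ : Config Nt) (h : e2 τ < Nt) : τ ⟨Nt - 1 - e2 τ, by omega⟩ = false :=
  e1_spec (rev τ) h

lemma e2_min (τ : Config Nt) (k : ℕ) (hk : k < e2 τ) (hkN : k < Nt) :
    τ ⟨Nt - 1 - k, by omega⟩ = true := e1_min (rev τ) k hk hkN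

lemma e2_le_of (τ : Config Nt) (k : ℕ) (hk : k < Nt)
    (hf : τ ⟨Nt - 1 - k, by omega⟩ = false) : e2 τ ≤ k := e1_le_of (rev τ) k hk hf

end runs

/-! ### extc lemmas -/

lemma extc_lt {n : ℕ} (σ : Config n) (t : ℕ) (h : t < n) : extc σ t = σ ⟨t, h⟩ := dif_pos h

lemma extc_ge {n : ℕ} (σ : Config n) (t : ℕ) (h : ¬ t < n) : extc σ t = false := dif_neg h

lemma extc_tl {ℓ Nt : ℕ} (σ : Config (Nt + (ℓ + 2))) (j : ℕ) :
    extc (tl ℓ Nt σ) j = extc σ (ℓ + 2 + j) := by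
  by_cases h : j < Nt
  · rw [extc_lt _ _ h, extc_lt _ _ (by omega : ℓ + 2 + j < Nt + (ℓ + 2))]
    rfl
  · rw [extc_ge _ _ h, extc_ge _ _ (by omega : ¬ ℓ + 2 + j < Nt + (ℓ + 2))]

lemma norun_iff {n ℓ : ℕ} (σ : Config n) :
    (∀ a : ℕ, ¬ ∀ k ≤ ℓ, extc σ (a + k) = true) ↔
      ∀ a : ℕ, ∃ k, k ≤ ℓ ∧ extc σ (a + k) = false := by
  constructor
  · intro h a
    have h2 := h a
    push_neg at h2
    obtain ⟨k, hk1, hk2⟩ := h2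
    refine ⟨k, hk1, ?_⟩
    cases hv : extc σ (a + k)
    · rfl
    · exact absurd hv hk2
  · intro h a hall
    obtain ⟨k, hk1, hk2⟩ := h a
    rw [hall k hk1] at hk2
    simp at hk2

/-! ### the open chain: characterization -/

section openchar

variable {ℓ Nt c₁ cN : ℕ}

def TOKopen (ℓ Nt cN : ℕ) (τ : Config Nt) : Prop :=
  (∀ a : ℕ, ¬ ∀ k ≤ ℓ, extc τ (a + k) = true) ∧
    ¬ (cN + 1 ≤ Nt ∧ ∀ k ≤ cN, extc τ (Nt - 1 - k) = true)

lemma e1_le_ell_of_norun (hNt : ℓ < Nt) (τ : Config Nt)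
    (h : ∀ a : ℕ, ∃ k, k ≤ ℓ ∧ extc τ (a + k) = false) : e1 τ ≤ ℓ := by
  obtain ⟨k, hk1, hk2⟩ := h 0
  rw [Nat.zero_add] at hk2
  rw [extc_lt τ k (by omega)] at hk2
  have := e1_le_of τ k (by omega) hk2
  omega

lemma char_open (hc1 : c₁ ≤ ℓ) (hcN : cN ≤ ℓ) (hNt : ℓ < Nt)
    (σ : Config (Nt + (ℓ + 2))) :
    OpenOK (Nt + (ℓ + 2)) ℓ c₁ cN σ ↔
      TOKopen ℓ Nt cN (tl ℓ Nt σ) ∧ hitA ℓ Nt (fun _ => c₁) σ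
        ∧ hitB ℓ Nt (fun τ => ℓ - e1 τ) σ := by
  constructor
  · rintro ⟨h1, h2, h3⟩
    rw [norun_iff] at h1
    have hTOK1 : ∀ a : ℕ, ∃ k, k ≤ ℓ ∧ extc (tl ℓ Nt σ) (a + k) = false := by
      intro a
      obtain ⟨k, hk1, hk2⟩ := h1 (ℓ + 2 + a)
      exact ⟨k, hk1, by rw [extc_tl, show ℓ + 2 + (a + k) = ℓ + 2 + a + k by ring]; exact hk2⟩
    have he : e1 (tl ℓ Nt σ) ≤ ℓ := e1_le_ell_of_norun hNt _ hTOK1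
    refine ⟨⟨(norun_iff _).mpr hTOK1, ?_⟩, ?_, ?_⟩
    · -- right end condition transfers
      rintro ⟨hle, hall⟩
      apply h3
      refine ⟨by omega, fun k hk => ?_⟩
      rw [show Nt + (ℓ + 2) - 1 - k = ℓ + 2 + (Nt - 1 - k) by omega, ← extc_tl]
      exact hall k hk
    · -- hitA
      have hno : ¬ ∀ k ≤ c₁, extc σ k = true := fun hall => h2 ⟨by omega, hall⟩
      push_neg at hno
      obtain ⟨k, hk1, hk2⟩ := hno
      refine ⟨⟨k, by omega⟩, hk1, ?_⟩
      rw [← extc_lt σ k (by omega)]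
      cases hv : extc σ k
      · rfl
      · exact absurd hv hk2
    · -- hitB
      obtain ⟨k, hk1, hk2⟩ := h1 (e1 (tl ℓ Nt σ) + 1)
      set e := e1 (tl ℓ Nt σ) with hee
      by_cases hp : e + 1 + k < ℓ + 2
      · refine ⟨⟨e + 1 + k, by omega⟩, ?_, ?_, ?_⟩
        · show ℓ + 1 - (ℓ - e1 (tl ℓ Nt σ)) ≤ e + 1 + k
          omega
        · show e + 1 + k ≤ ℓ + 1
          omega
        · rw [← extc_lt σ (e + 1 + k) (by omega)]
          exact hk2
      · -- impossible: inside the leading run of the tail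
        exfalso
        have hq : e + 1 + k = ℓ + 2 + (e + 1 + k - (ℓ + 2)) := by omega
        rw [hq, ← extc_tl] at hk2
        rw [extc_lt _ _ (by omega : e + 1 + k - (ℓ + 2) < Nt)] at hk2
        have := e1_min (tl ℓ Nt σ) (e + 1 + k - (ℓ + 2)) (by omega) (by omega)
        rw [this] at hk2
        simp at hk2
  · rintro ⟨⟨ht1, ht2⟩, ⟨xA, hxA1, hxA2⟩, ⟨xB, hxB1, hxB2, hxB3⟩⟩
    have hxA1' : xA.1 ≤ c₁ := hxA1
    have hxB1' : ℓ + 1 - (ℓ - e1 (tl ℓ Nt σ)) ≤ xB.1 := hxB1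
    have ht1' := (norun_iff _).mp ht1
    have he : e1 (tl ℓ Nt σ) ≤ ℓ := e1_le_ell_of_norun hNt _ ht1'
    set e := e1 (tl ℓ Nt σ) with hee
    refine ⟨?_, ?_, ?_⟩
    · rw [norun_iff]
      intro a
      by_cases ha : ℓ + 2 ≤ a
      · obtain ⟨k, hk1, hk2⟩ := ht1' (a - (ℓ + 2))
        refine ⟨k, hk1, ?_⟩
        rw [extc_tl, show ℓ + 2 + (a - (ℓ + 2) + k) = a + k by omega] at hk2
        exact hk2
      · by_cases ha0 : a = 0
        · refine ⟨xA.1, by omega, ?_⟩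
          rw [ha0, Nat.zero_add, extc_lt σ xA.1 xA.isLt, Fin.eta]
          exact hxA2
        · by_cases hxb : a ≤ xB.1
          · refine ⟨xB.1 - a, by omega, ?_⟩
            rw [show a + (xB.1 - a) = xB.1 by omega, extc_lt σ xB.1 xB.isLt, Fin.eta]
            exact hxB3
          · -- a > xB ≥ e+1, use the first empty site of the tail
            have hxB1'' : e + 1 ≤ xB.1 := by omega
            refine ⟨ℓ + 2 + e - a, by omega, ?_⟩
            rw [show a + (ℓ + 2 + e - a) = ℓ + 2 + e by omega, ← extc_tl,
              extc_lt _ _ (by omega : e < Nt)]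
            exact e1_spec (tl ℓ Nt σ) (by omega)
    · rintro ⟨_, hall⟩
      have := hall xA.1 hxA1
      rw [extc_lt σ xA.1 xA.isLt, Fin.eta, hxA2] at this
      simp at this
    · rintro ⟨_, hall⟩
      apply ht2
      refine ⟨by omega, fun k hk => ?_⟩
      have := hall k hk
      rw [show Nt + (ℓ + 2) - 1 - k = ℓ + 2 + (Nt - 1 - k) by omega, ← extc_tl] at this
      exact this

lemma okt_open (hc1 : c₁ ≤ ℓ) (hcN : cN ≤ ℓ) (hNt : ℓ < Nt) (τ : Config Nt) :
    OpenOK Nt ℓ c₁ cN τ ↔ TOKopen ℓ Nt cN τ ∧ ℓ ≤ c₁ + (ℓ - e1 τ) := by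
  constructor
  · rintro ⟨h1, h2, h3⟩
    have h1' := (norun_iff _).mp h1
    have he : e1 τ ≤ ℓ := e1_le_ell_of_norun hNt _ h1'
    have hno : ¬ ∀ k ≤ c₁, extc τ k = true := fun hall => h2 ⟨by omega, hall⟩
    push_neg at hno
    obtain ⟨k, hk1, hk2⟩ := hno
    have hk2' : τ ⟨k, by omega⟩ = false := by
      rw [← extc_lt τ k (by omega)]
      cases hv : extc τ k
      · rfl
      · exact absurd hv hk2
    have := e1_le_of τ k (by omega) hk2'
    exact ⟨⟨h1, h3⟩, by omega⟩
  · rintro ⟨⟨h1, h3⟩, hsec⟩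
    have h1' := (norun_iff _).mp h1
    have he : e1 τ ≤ ℓ := e1_le_ell_of_norun hNt _ h1'
    refine ⟨h1, ?_, h3⟩
    rintro ⟨_, hall⟩
    have := hall (e1 τ) (by omega)
    rw [extc_lt τ (e1 τ) (by omega), e1_spec τ (by omega)] at this
    simp at this

def openData (ℓ Nt c₁ cN : ℕ) (hc1 : c₁ ≤ ℓ) (hcN : cN ≤ ℓ) (hNt : ℓ < Nt) :
    BCData ℓ Nt where
  OKN := OpenOK (Nt + (ℓ + 2)) ℓ c₁ cN
  OKt := OpenOK Nt ℓ c₁ cN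
  TOK := TOKopen ℓ Nt cN
  aOf := fun _ => c₁
  bOf := fun τ => ℓ - e1 τ
  hA := fun _ => hc1
  hB := fun τ => by show ℓ - e1 τ ≤ ℓ; omega
  hch := fun σ => char_open hc1 hcN hNt σ
  hok := fun τ => okt_open hc1 hcN hNt τ

end openchar

/-! ### the closed chain: characterization -/

section perchar

variable {ℓ Nt : ℕ}

lemma cyc_nowrap {n : ℕ} (i : Fin n) (k : ℕ) (p : Fin n) (hp : i.1 + k = p.1) :
    cyc i k = p := by
  apply Fin.ext
  show (i.1 + k) % n = p.1
  rw [Nat.mod_eq_of_lt (by rw [hp]; exact p.isLt)]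
  exact hp

lemma cyc_wrap {n : ℕ} (i : Fin n) (k : ℕ) (p : Fin n) (h1 : n ≤ i.1 + k)
    (hp : i.1 + k - n = p.1) : cyc i k = p := by
  apply Fin.ext
  show (i.1 + k) % n = p.1
  rw [Nat.mod_eq_sub_mod h1, Nat.mod_eq_of_lt (by rw [hp]; exact p.isLt)]
  exact hp

lemma tl_apply (σ : Config (Nt + (ℓ + 2))) (q : ℕ) (hq : q < Nt) :
    σ ⟨ℓ + 2 + q, by omega⟩ = tl ℓ Nt σ ⟨q, hq⟩ := rfl

def TOKper (ℓ Nt : ℕ) (τ : Config Nt) : Prop :=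
  ∀ a : ℕ, ¬ ∀ k ≤ ℓ, extc τ (a + k) = true

lemma e2_le_ell_of_norun (hNt : ℓ < Nt) (τ : Config Nt)
    (h : ∀ a : ℕ, ∃ k, k ≤ ℓ ∧ extc τ (a + k) = false) : e2 τ ≤ ℓ := by
  obtain ⟨k, hk1, hk2⟩ := h (Nt - 1 - ℓ)
  rw [extc_lt τ _ (by omega)] at hk2
  have h2 : τ ⟨Nt - 1 - (ℓ - k), by omega⟩ = false := by
    rw [show (⟨Nt - 1 - (ℓ - k), by omega⟩ : Fin Nt) = ⟨Nt - 1 - ℓ + k, by omega⟩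
      from Fin.ext (by show Nt - 1 - (ℓ - k) = Nt - 1 - ℓ + k; omega)]
    exact hk2
  have := e2_le_of τ (ℓ - k) (by omega) h2
  omega

lemma okt_per (hNt : ℓ < Nt) (τ : Config Nt) :
    PerOK Nt ℓ τ ↔ TOKper ℓ Nt τ ∧ ℓ ≤ (ℓ - e2 τ) + (ℓ - e1 τ) := by
  constructor
  · intro h
    have hTOK : ∀ a : ℕ, ∃ k, k ≤ ℓ ∧ extc τ (a + k) = false := by
      intro a
      by_cases ha : a + ℓ < Nt
      · obtain ⟨k, hk1, hk2⟩ := h ⟨a, by omega⟩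
        refine ⟨k, hk1, ?_⟩
        rw [extc_lt τ (a + k) (by omega)]
        rw [cyc_nowrap _ k ⟨a + k, by omega⟩ rfl] at hk2
        exact hk2
      · by_cases ha2 : a < Nt
        · exact ⟨Nt - a, by omega, extc_ge _ _ (by omega)⟩
        · exact ⟨0, by omega, extc_ge _ _ (by omega)⟩
    have he1 : e1 τ ≤ ℓ := e1_le_ell_of_norun hNt τ hTOK
    have he2 : e2 τ ≤ ℓ := e2_le_ell_of_norun hNt τ hTOK
    refine ⟨(norun_iff τ).mpr hTOK, ?_⟩
    by_contra hlt
    have hsum : ℓ + 1 ≤ e1 τ + e2 τ := by omega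
    have he2pos : 1 ≤ e2 τ := by omega
    obtain ⟨k, hk1, hk2⟩ := h ⟨Nt - e2 τ, by omega⟩
    by_cases hke : k < e2 τ
    · rw [cyc_nowrap _ k ⟨Nt - e2 τ + k, by omega⟩ rfl] at hk2
      have := e2_min τ (e2 τ - 1 - k) (by omega) (by omega)
      rw [show (⟨Nt - 1 - (e2 τ - 1 - k), by omega⟩ : Fin Nt)
        = ⟨Nt - e2 τ + k, by omega⟩ from Fin.ext (by
          show Nt - 1 - (e2 τ - 1 - k) = Nt - e2 τ + k
          omega)] at this
      rw [this] at hk2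
      simp at hk2
    · rw [cyc_wrap _ k ⟨k - e2 τ, by omega⟩ (by show Nt ≤ Nt - e2 τ + k; omega)
        (by show Nt - e2 τ + k - Nt = k - e2 τ; omega)] at hk2
      have := e1_min τ (k - e2 τ) (by omega) (by omega)
      rw [this] at hk2
      simp at hk2
  · rintro ⟨hTOK, hsec⟩
    have hTOK' := (norun_iff τ).mp hTOK
    have he1 : e1 τ ≤ ℓ := e1_le_ell_of_norun hNt τ hTOK'
    have he2 : e2 τ ≤ ℓ := e2_le_ell_of_norun hNt τ hTOK'
    have hsum : e1 τ + e2 τ ≤ ℓ := by omega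
    intro i
    by_cases hi : i.1 + ℓ < Nt
    · obtain ⟨k, hk1, hk2⟩ := hTOK' i.1
      rw [extc_lt τ (i.1 + k) (by omega)] at hk2
      exact ⟨k, hk1, by rw [cyc_nowrap i k ⟨i.1 + k, by omega⟩ rfl]; exact hk2⟩
    · by_cases hie : i.1 ≤ Nt - 1 - e2 τ
      · refine ⟨Nt - 1 - e2 τ - i.1, by omega, ?_⟩
        rw [cyc_nowrap i _ ⟨Nt - 1 - e2 τ, by omega⟩
          (by show i.1 + (Nt - 1 - e2 τ - i.1) = Nt - 1 - e2 τ; omega)]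
        exact e2_spec τ (by omega)
      · refine ⟨Nt - i.1 + e1 τ, by omega, ?_⟩
        rw [cyc_wrap i _ ⟨e1 τ, by omega⟩ (by omega)
          (by show i.1 + (Nt - i.1 + e1 τ) - Nt = e1 τ; omega)]
        exact e1_spec τ (by omega)

lemma char_per (hNt : ℓ < Nt) (σ : Config (Nt + (ℓ + 2))) :
    PerOK (Nt + (ℓ + 2)) ℓ σ ↔
      TOKper ℓ Nt (tl ℓ Nt σ) ∧ hitA ℓ Nt (fun τ => ℓ - e2 τ) σ
        ∧ hitB ℓ Nt (fun τ => ℓ - e1 τ) σ := by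
  constructor
  · intro h
    have hTOK : ∀ a : ℕ, ∃ k, k ≤ ℓ ∧ extc (tl ℓ Nt σ) (a + k) = false := by
      intro a
      by_cases ha : a + ℓ < Nt
      · obtain ⟨k, hk1, hk2⟩ := h ⟨ℓ + 2 + a, by omega⟩
        refine ⟨k, hk1, ?_⟩
        rw [extc_tl, extc_lt σ _ (by omega : ℓ + 2 + (a + k) < Nt + (ℓ + 2))]
        rw [cyc_nowrap _ k ⟨ℓ + 2 + (a + k), by omega⟩
          (by show ℓ + 2 + a + k = ℓ + 2 + (a + k); omega)] at hk2
        exact hk2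
      · by_cases ha2 : a < Nt
        · exact ⟨Nt - a, by omega, extc_ge _ _ (by omega)⟩
        · exact ⟨0, by omega, extc_ge _ _ (by omega)⟩
    have he1 : e1 (tl ℓ Nt σ) ≤ ℓ := e1_le_ell_of_norun hNt _ hTOK
    have he2 : e2 (tl ℓ Nt σ) ≤ ℓ := e2_le_ell_of_norun hNt _ hTOK
    set τ := tl ℓ Nt σ with hτ
    refine ⟨(norun_iff τ).mpr hTOK, ?_, ?_⟩
    · -- hitA
      by_cases he20 : e2 τ = 0
      · obtain ⟨k, hk1, hk2⟩ := h ⟨0, by omega⟩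
        rw [cyc_nowrap _ k ⟨k, by omega⟩ (by show 0 + k = k; omega)] at hk2
        exact ⟨⟨k, by omega⟩, by show k ≤ ℓ - e2 τ; omega, hk2⟩
      · obtain ⟨k, hk1, hk2⟩ := h ⟨Nt + (ℓ + 2) - e2 τ, by omega⟩
        by_cases hke : k < e2 τ
        · exfalso
          rw [cyc_nowrap _ k ⟨Nt + (ℓ + 2) - e2 τ + k, by omega⟩ rfl] at hk2
          have h2 := e2_min τ (e2 τ - 1 - k) (by omega) (by omega)
          rw [show (⟨Nt + (ℓ + 2) - e2 τ + k, by omega⟩ : Fin (Nt + (ℓ + 2)))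
            = ⟨ℓ + 2 + (Nt - 1 - (e2 τ - 1 - k)), by omega⟩ from Fin.ext (by
              show Nt + (ℓ + 2) - e2 τ + k = ℓ + 2 + (Nt - 1 - (e2 τ - 1 - k))
              omega)] at hk2
          have hcontra := h2.symm.trans hk2
          simp at hcontra
        · rw [cyc_wrap _ k ⟨k - e2 τ, by omega⟩
            (by show Nt + (ℓ + 2) ≤ Nt + (ℓ + 2) - e2 τ + k; omega)
            (by show Nt + (ℓ + 2) - e2 τ + k - (Nt + (ℓ + 2)) = k - e2 τ; omega)] at hk2
          exact ⟨⟨k - e2 τ, by omega⟩, by show k - e2 τ ≤ ℓ - e2 τ; omega, hk2⟩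
    · -- hitB
      obtain ⟨k, hk1, hk2⟩ := h ⟨e1 τ + 1, by omega⟩
      by_cases hp : e1 τ + 1 + k < ℓ + 2
      · rw [cyc_nowrap _ k ⟨e1 τ + 1 + k, by omega⟩ rfl] at hk2
        refine ⟨⟨e1 τ + 1 + k, by omega⟩, ?_, ?_, hk2⟩
        · show ℓ + 1 - (ℓ - e1 τ) ≤ e1 τ + 1 + k
          omega
        · show e1 τ + 1 + k ≤ ℓ + 1
          omega
      · exfalso
        rw [cyc_nowrap _ k ⟨e1 τ + 1 + k, by omega⟩ rfl] at hk2
        have h2 := e1_min τ (e1 τ + 1 + k - (ℓ + 2)) (by omega) (by omega)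
        rw [show (⟨e1 τ + 1 + k, by omega⟩ : Fin (Nt + (ℓ + 2)))
          = ⟨ℓ + 2 + (e1 τ + 1 + k - (ℓ + 2)), by omega⟩ from Fin.ext (by
            show e1 τ + 1 + k = ℓ + 2 + (e1 τ + 1 + k - (ℓ + 2))
            omega)] at hk2
        have hcontra := h2.symm.trans hk2
        simp at hcontra
  · rintro ⟨hTOK, ⟨xA, hxA1, hxA2⟩, ⟨xB, hxB1, hxB2, hxB3⟩⟩
    set τ := tl ℓ Nt σ with hτ
    have hxA1' : xA.1 ≤ ℓ - e2 τ := hxA1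
    have hxB1' : ℓ + 1 - (ℓ - e1 τ) ≤ xB.1 := hxB1
    have hTOK' := (norun_iff τ).mp hTOK
    have he1 : e1 τ ≤ ℓ := e1_le_ell_of_norun hNt _ hTOK'
    have he2 : e2 τ ≤ ℓ := e2_le_ell_of_norun hNt _ hTOK'
    intro i
    by_cases hib : i.1 ≤ ℓ + 1
    · by_cases hi0 : i.1 = 0
      · refine ⟨xA.1, by omega, ?_⟩
        rw [cyc_nowrap i _ xA (by omega)]
        exact hxA2
      · by_cases hxb : i.1 ≤ xB.1
        · refine ⟨xB.1 - i.1, by omega, ?_⟩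
          rw [cyc_nowrap i _ xB (by omega)]
          exact hxB3
        · refine ⟨ℓ + 2 + e1 τ - i.1, by omega, ?_⟩
          rw [cyc_nowrap i _ ⟨ℓ + 2 + e1 τ, by omega⟩
            (by show i.1 + (ℓ + 2 + e1 τ - i.1) = ℓ + 2 + e1 τ; omega)]
          rw [tl_apply σ (e1 τ) (by omega)]
          exact e1_spec τ (by omega)
    · set t := i.1 - (ℓ + 2) with ht
      by_cases hta : t + ℓ < Nt
      · obtain ⟨k, hk1, hk2⟩ := hTOK' t
        rw [extc_lt τ (t + k) (by omega)] at hk2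
        refine ⟨k, hk1, ?_⟩
        rw [cyc_nowrap i k ⟨ℓ + 2 + (t + k), by omega⟩
          (by show i.1 + k = ℓ + 2 + (t + k); omega)]
        rw [tl_apply σ (t + k) (by omega)]
        exact hk2
      · by_cases hie : t ≤ Nt - 1 - e2 τ
        · refine ⟨Nt - 1 - e2 τ - t, by omega, ?_⟩
          rw [cyc_nowrap i _ ⟨ℓ + 2 + (Nt - 1 - e2 τ), by omega⟩
            (by show i.1 + (Nt - 1 - e2 τ - t) = ℓ + 2 + (Nt - 1 - e2 τ); omega)]
          rw [tl_apply σ _ (by omega : Nt - 1 - e2 τ < Nt)]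
          exact e2_spec τ (by omega)
        · refine ⟨Nt + (ℓ + 2) - i.1 + xA.1, by omega, ?_⟩
          rw [cyc_wrap i _ xA (by omega) (by omega)]
          exact hxA2

def perData (ℓ Nt : ℕ) (hNt : ℓ < Nt) : BCData ℓ Nt where
  OKN := PerOK (Nt + (ℓ + 2)) ℓ
  OKt := PerOK Nt ℓ
  TOK := TOKper ℓ Nt
  aOf := fun τ => ℓ - e2 τ
  bOf := fun τ => ℓ - e1 τ
  hA := fun τ => by show ℓ - e2 τ ≤ ℓ; omega
  hB := fun τ => by show ℓ - e1 τ ≤ ℓ; omega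
  hch := fun σ => char_per hNt σ
  hok := fun τ => okt_per hNt τ

end perchar

end HQ1
/-- Structure of the cohomology of `Q₁` (the supercharge restricted to the first
`ℓ+2` sites) for a chain of `N = Ñ + (ℓ+2) > 2ℓ+2` sites with periodic or special
boundary conditions: (a) `H_{Q₁}^f = 0` for `f < ℓ`; (b) for `f ≥ ℓ`, every class of
`H_{Q₁}^f` is represented by a state of the form `G ψ'` with
`ψ' ∈ V_{Ñ, f-ℓ}` (with the corresponding boundary conditions), and nonzero classes
have such representatives with `ψ' ≠ 0`. -/
theorem structure_of_HQ1 (ℓ Nt : ℕ) (hℓ : 1 ≤ ℓ) (hNt : ℓ < Nt)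
    (OKN : Config (Nt + (ℓ + 2)) → Prop) (OKt : Config Nt → Prop)
    (hBC : (OKN = PerOK (Nt + (ℓ + 2)) ℓ ∧ OKt = PerOK Nt ℓ) ∨
      ∃ c₁ cN, c₁ ≤ ℓ ∧ cN ≤ ℓ ∧
        OKN = OpenOK (Nt + (ℓ + 2)) ℓ c₁ cN ∧ OKt = OpenOK Nt ℓ c₁ cN) :
    (∀ f, f < ℓ → cohDim (Nt + (ℓ + 2)) OKN (S1 (Nt + (ℓ + 2)) ℓ) f = 0) ∧
    (∀ f, ℓ ≤ f → ∀ ψ : AState (Nt + (ℓ + 2)) OKN,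
      Qop (Nt + (ℓ + 2)) OKN (S1 (Nt + (ℓ + 2)) ℓ) ψ = 0 →
      ψ ∈ gradeV (Nt + (ℓ + 2)) OKN f →
      ∃ ψ' : AState Nt OKt, ψ' ∈ gradeV Nt OKt (f - ℓ) ∧
        ψ - Gop ℓ Nt OKN OKt ψ' ∈
          (gradeV (Nt + (ℓ + 2)) OKN (f - 1)).map
            (Qop (Nt + (ℓ + 2)) OKN (S1 (Nt + (ℓ + 2)) ℓ)) ∧
        (ψ ∉ (gradeV (Nt + (ℓ + 2)) OKN (f - 1)).map
            (Qop (Nt + (ℓ + 2)) OKN (S1 (Nt + (ℓ + 2)) ℓ)) → ψ' ≠ 0)) := by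
  rcases hBC with ⟨hN, ht⟩ | ⟨c₁, cN, hc1, hcN, hN, ht⟩
  · subst hN; subst ht
    exact HQ1.core_main (HQ1.perData ℓ Nt hNt)
  · subst hN; subst ht
    exact HQ1.core_main (HQ1.openData ℓ Nt c₁ cN hc1 hcN hNt)

end
end

section
/- Let ℓ ≥ 1 and N > 2ℓ+2, with periodic boundary conditions or special boundary conditions s = (c₁, c_N), and Ñ = N − (ℓ+2). If ψ' ∈ V_Ñ and φ ∈ V_N satisfy G ψ' = Q₁ φ, then ψ' = 0 (and hence Q₁ φ = 0). -/
attribute [local instance 10] Classical.propDecidable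

noncomputable section

/-! ### Auxiliary machinery -/

lemma extc_lt {N : ℕ} (σ : Config N) {t : ℕ} (h : t < N) : extc σ t = σ ⟨t, h⟩ := dif_pos h

lemma sum_subtype_ite {α : Type*} [Fintype α] [DecidableEq α] {P : α → Prop} (X : α) (f : {a // P a} → ℂ) :
    (∑ τ : {a // P a}, if τ.1 = X then f τ else 0) = if h : P X then f ⟨X, h⟩ else 0 := by
  split_ifs with h
  · rw [Finset.sum_eq_single_of_mem ⟨X, h⟩ (Finset.mem_univ _)]
    · simp
    · intro b _ hb
      exact if_neg fun e => hb (Subtype.ext e)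
  · apply Finset.sum_eq_zero
    intro τ _
    rw [if_neg]
    intro e
    exact h (e ▸ τ.2)

lemma filter_lt_card {M : ℕ} (σ : Config M) (i : Fin M) :
    (Finset.univ.filter fun j => j < i ∧ σ j = true).card
      = ((Finset.range i.1).filter fun t => extc σ t = true).card := by
  apply Finset.card_bij (fun (j : Fin M) _ => j.1)
  · intro a ha
    simp only [Finset.mem_filter, Finset.mem_univ, true_and, Fin.lt_def] at ha
    simp only [Finset.mem_filter, Finset.mem_range]
    refine ⟨ha.1, ?_⟩
    rw [extc_lt σ (lt_trans ha.1 i.isLt)]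
    exact ha.2
  · intro a1 h1 a2 h2 e
    exact Fin.ext e
  · intro t ht
    simp only [Finset.mem_filter, Finset.mem_range] at ht
    refine ⟨⟨t, lt_trans ht.1 i.isLt⟩, ?_, rfl⟩
    simp only [Finset.mem_filter, Finset.mem_univ, true_and, Fin.lt_def]
    refine ⟨ht.1, ?_⟩
    rw [← extc_lt σ (lt_trans ht.1 i.isLt)]
    exact ht.2

/-- Head-parametrized configurations: head (first `ℓ+2` sites) empty exactly on `E`,
tail equal to `T`. -/
def hp (ℓ Nt : ℕ) (T : Config Nt) (E : ℕ → Prop) : Config (Nt + (ℓ + 2)) := fun i =>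
  if h : i.1 < ℓ + 2 then decide (¬ E i.1)
  else T ⟨i.1 - (ℓ + 2), by have h2 := i.isLt; omega⟩

def E2 (a b : ℕ) : ℕ → Prop := fun t => t = a ∨ t = b
def E3 (a b c : ℕ) : ℕ → Prop := fun t => t = a ∨ t = b ∨ t = c

lemma extc_hp {ℓ Nt : ℕ} (T : Config Nt) (E : ℕ → Prop) (t : ℕ) :
    extc (hp ℓ Nt T E) t
    = if t < ℓ + 2 then decide (¬ E t) else extc T (t - (ℓ + 2)) := by
  unfold extc hp
  split_ifs with h1 h2 h3 h4 h5 <;> first | rfl | omega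

lemma hp_congr {ℓ Nt : ℕ} (T : Config Nt) {E E' : ℕ → Prop}
    (h : ∀ t, t < ℓ + 2 → (E t ↔ E' t)) : hp ℓ Nt T E = hp ℓ Nt T E' := by
  funext i
  unfold hp
  split_ifs with h1
  · exact decide_eq_decide.2 (not_congr (h i.1 h1))
  · rfl

lemma hp_head_iff {ℓ Nt : ℕ} {T : Config Nt} {E E' : ℕ → Prop}
    (h : hp ℓ Nt T E = hp ℓ Nt T E') : ∀ t, t < ℓ + 2 → (E t ↔ E' t) := by
  intro t ht
  have := congrFun h ⟨t, by omega⟩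
  unfold hp at this
  rw [dif_pos ht, dif_pos ht] at this
  exact not_iff_not.1 (decide_eq_decide.1 this)

lemma hp_tail_eq {ℓ Nt : ℕ} {T T' : Config Nt} {E E' : ℕ → Prop}
    (h : hp ℓ Nt T E = hp ℓ Nt T' E') : T = T' := by
  funext u
  have h2 := congrArg (fun σ => extc σ (ℓ + 2 + u.1)) h
  simp only [extc_hp] at h2
  rw [if_neg (by omega), if_neg (by omega)] at h2
  have he : ℓ + 2 + u.1 - (ℓ + 2) = u.1 := by omega
  rw [he, extc_lt T u.isLt, extc_lt T' u.isLt] at h2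
  simpa using h2

lemma glue_eq_hp (ℓ Nt : ℕ) (S : Config Nt) :
    glue ℓ Nt S = hp ℓ Nt S (E2 0 (ℓ + 1)) := by
  funext i
  unfold glue hp
  split_ifs with h1
  · exact decide_eq_decide.2 (by unfold E2; omega)
  · rfl

lemma update_hp_true {ℓ Nt : ℕ} (T : Config Nt) (E : ℕ → Prop) (i : Fin (Nt + (ℓ + 2)))
    (h : i.1 < ℓ + 2) :
    Function.update (hp ℓ Nt T E) i true = hp ℓ Nt T (fun t => E t ∧ t ≠ i.1) := by
  funext j
  rcases eq_or_ne j i with rfl | hne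
  · rw [Function.update_self]
    unfold hp
    rw [dif_pos h]
    simp
  · rw [Function.update_of_ne hne]
    unfold hp
    split_ifs with h1
    · refine decide_eq_decide.2 (not_congr ?_)
      have : j.1 ≠ i.1 := fun e => hne (Fin.ext e)
      tauto
    · rfl

lemma update_hp_false {ℓ Nt : ℕ} (T : Config Nt) (E : ℕ → Prop) (i : Fin (Nt + (ℓ + 2)))
    (h : i.1 < ℓ + 2) :
    Function.update (hp ℓ Nt T E) i false = hp ℓ Nt T (fun t => E t ∨ t = i.1) := by
  funext j
  rcases eq_or_ne j i with rfl | hne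
  · rw [Function.update_self]
    unfold hp
    rw [dif_pos h]
    simp
  · rw [Function.update_of_ne hne]
    unfold hp
    split_ifs with h1
    · refine decide_eq_decide.2 (not_congr ?_)
      have : j.1 ≠ i.1 := fun e => hne (Fin.ext e)
      tauto
    · rfl

/-- The weight function implementing the dual functional. -/
def wfun (ℓ Nt : ℕ) (T : Config Nt) (b₁ : ℕ) : Config (Nt + (ℓ + 2)) → ℂ := fun τ =>
  ∑ p ∈ Finset.range (ℓ + 2) ×ˢ Finset.range (ℓ + 2),
    if p.1 < p.2 ∧ b₁ < p.2 ∧ τ = hp ℓ Nt T (E2 p.1 p.2) then (-1 : ℂ) ^ (p.1 + p.2) else 0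

lemma wfun_pair (ℓ Nt : ℕ) (T : Config Nt) (b₁ : ℕ) {a b : ℕ} (hab : a < b) (hb : b ≤ ℓ + 1) :
    wfun ℓ Nt T b₁ (hp ℓ Nt T (E2 a b))
      = if b₁ < b then (-1 : ℂ) ^ (a + b) else 0 := by
  unfold wfun
  rw [Finset.sum_eq_single_of_mem (a, b)
    (by simp [Finset.mem_product, Finset.mem_range]; omega)]
  · split_ifs with h1 h2 h3 <;> first | rfl | tauto
  · rintro ⟨x, y⟩ hmem hne
    rw [if_neg]
    rintro ⟨hxy, -, heq⟩
    simp only [Finset.mem_product, Finset.mem_range] at hmem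
    have hiff := hp_head_iff heq.symm
    have h1 := hiff a (by omega)
    have h2 := hiff b (by omega)
    have h3 := hiff x (by omega)
    have h4 := hiff y (by omega)
    unfold E2 at h1 h2 h3 h4
    apply hne
    have : x = a ∧ y = b := by omega
    simp [Prod.ext_iff, this.1, this.2]
  
lemma wfun_zero (ℓ Nt : ℕ) (T : Config Nt) (b₁ : ℕ) (τ : Config (Nt + (ℓ + 2)))
    (h : ∀ a b, a < b → b ≤ ℓ + 1 → τ ≠ hp ℓ Nt T (E2 a b)) : wfun ℓ Nt T b₁ τ = 0 := by
  apply Finset.sum_eq_zero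
  rintro ⟨x, y⟩ hmem
  rw [if_neg]
  rintro ⟨hxy, -, heq⟩
  simp only [Finset.mem_product, Finset.mem_range] at hmem
  exact h x y hxy (by omega) heq
section sgnlemmas

variable {ℓ Nt : ℕ} (T : Config Nt) {a b c : ℕ}

lemma sgn_E3_a (hab : a < b) (hbc : b < c) (hc : c ≤ ℓ + 1)
    (i : Fin (Nt + (ℓ + 2))) (hia : i.1 = a) :
    sgn (hp ℓ Nt T (E3 a b c)) i = (-1 : ℂ) ^ a := by
  unfold sgn
  rw [filter_lt_card, hia]
  have he : ((Finset.range a).filter fun t => extc (hp ℓ Nt T (E3 a b c)) t = true)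
      = Finset.range a := by
    apply Finset.filter_true_of_mem
    intro t ht
    rw [Finset.mem_range] at ht
    rw [extc_hp, if_pos (by omega), decide_eq_true_eq]
    unfold E3
    omega
  rw [he, Finset.card_range]

lemma sgn_E3_b (hab : a < b) (hbc : b < c) (hc : c ≤ ℓ + 1)
    (i : Fin (Nt + (ℓ + 2))) (hib : i.1 = b) :
    sgn (hp ℓ Nt T (E3 a b c)) i = (-1 : ℂ) ^ (b - 1) := by
  unfold sgn
  rw [filter_lt_card, hib]
  have he : ((Finset.range b).filter fun t => extc (hp ℓ Nt T (E3 a b c)) t = true)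
      = (Finset.range b).erase a := by
    ext t
    simp only [Finset.mem_filter, Finset.mem_range, Finset.mem_erase]
    constructor
    · rintro ⟨h1, h2⟩
      rw [extc_hp, if_pos (by omega), decide_eq_true_eq] at h2
      unfold E3 at h2
      omega
    · rintro ⟨hne, h1⟩
      refine ⟨h1, ?_⟩
      rw [extc_hp, if_pos (by omega), decide_eq_true_eq]
      unfold E3
      omega
  rw [he, Finset.card_erase_of_mem (Finset.mem_range.2 hab), Finset.card_range]

lemma sgn_E3_c (hab : a < b) (hbc : b < c) (hc : c ≤ ℓ + 1)
    (i : Fin (Nt + (ℓ + 2))) (hic : i.1 = c) :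
    sgn (hp ℓ Nt T (E3 a b c)) i = (-1 : ℂ) ^ (c - 2) := by
  unfold sgn
  rw [filter_lt_card, hic]
  have he : ((Finset.range c).filter fun t => extc (hp ℓ Nt T (E3 a b c)) t = true)
      = ((Finset.range c).erase a).erase b := by
    ext t
    simp only [Finset.mem_filter, Finset.mem_range, Finset.mem_erase]
    constructor
    · rintro ⟨h1, h2⟩
      rw [extc_hp, if_pos (by omega), decide_eq_true_eq] at h2
      unfold E3 at h2
      omega
    · rintro ⟨hne, h1⟩
      refine ⟨h1.2, ?_⟩
      rw [extc_hp, if_pos (by omega), decide_eq_true_eq]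
      unfold E3
      omega
  have hmb : b ∈ (Finset.range c).erase a := by
    rw [Finset.mem_erase]
    exact ⟨by omega, Finset.mem_range.2 hbc⟩
  rw [he, Finset.card_erase_of_mem hmb,
    Finset.card_erase_of_mem (Finset.mem_range.2 (lt_trans hab hbc)), Finset.card_range]
  congr 1 <;> omega

end sgnlemmas

lemma neg_one_pow_cancel (m n : ℕ) (h : m = n + 1) : (-1 : ℂ) ^ m + (-1 : ℂ) ^ n = 0 := by
  subst h
  rw [pow_succ]
  ring

lemma neg_one_pow_cancel' (m n : ℕ) (h : n = m + 1) : (-1 : ℂ) ^ m + (-1 : ℂ) ^ n = 0 := by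
  subst h
  rw [pow_succ]
  ring

lemma key_sum (ℓ Nt : ℕ) (OKN : Config (Nt + (ℓ + 2)) → Prop) (T : Config Nt) (b₁ r : ℕ)
    (hb₁ : b₁ ≤ ℓ) (hrb : r ≤ b₁)
    (Hpair : ∀ a b, a < b → b ≤ ℓ + 1 →
      (OKN (hp ℓ Nt T (E2 a b)) ↔ (a ≤ b₁ ∧ r + 1 ≤ b)))
    (σ : Config (Nt + (ℓ + 2))) :
    ∑ i : Fin (Nt + (ℓ + 2)),
      (if S1 (Nt + (ℓ + 2)) ℓ i ∧ σ i = false ∧ OKN (Function.update σ i true)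
       then wfun ℓ Nt T b₁ (Function.update σ i true) * sgn σ i else 0) = 0 := by
  by_cases hshape : ∃ a b c, a < b ∧ b < c ∧ c ≤ ℓ + 1 ∧ σ = hp ℓ Nt T (E3 a b c)
  · obtain ⟨a, b, c, hab, hbc, hc, rfl⟩ := hshape
    have haM : a < Nt + (ℓ + 2) := by omega
    have hbM : b < Nt + (ℓ + 2) := by omega
    have hcM : c < Nt + (ℓ + 2) := by omega
    have hvanish : ∀ x ∈ (Finset.univ : Finset (Fin (Nt + (ℓ + 2)))),
        x ∉ ({⟨a, haM⟩, ⟨b, hbM⟩, ⟨c, hcM⟩} : Finset (Fin (Nt + (ℓ + 2)))) →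
        (if S1 (Nt + (ℓ + 2)) ℓ x ∧ hp ℓ Nt T (E3 a b c) x = false ∧
            OKN (Function.update (hp ℓ Nt T (E3 a b c)) x true)
         then wfun ℓ Nt T b₁ (Function.update (hp ℓ Nt T (E3 a b c)) x true)
            * sgn (hp ℓ Nt T (E3 a b c)) x else 0) = 0 := by
      intro x _ hx
      by_cases hxh : x.1 < ℓ + 2
      · have hxv : hp ℓ Nt T (E3 a b c) x = true := by
          unfold hp
          rw [dif_pos hxh, decide_eq_true_eq]
          unfold E3
          simp only [Finset.mem_insert, Finset.mem_singleton] at hx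
          push_neg at hx
          obtain ⟨hx1, hx2, hx3⟩ := hx
          have e1 : x.1 ≠ a := fun e => hx1 (Fin.ext e)
          have e2 : x.1 ≠ b := fun e => hx2 (Fin.ext e)
          have e3 : x.1 ≠ c := fun e => hx3 (Fin.ext e)
          omega
        rw [if_neg]
        rintro ⟨-, hf, -⟩
        rw [hxv] at hf
        exact Bool.noConfusion hf
      · rw [if_neg]
        rintro ⟨hs, -, -⟩
        exact hxh hs
    rw [← Finset.sum_subset (Finset.subset_univ
      ({⟨a, haM⟩, ⟨b, hbM⟩, ⟨c, hcM⟩} : Finset (Fin (Nt + (ℓ + 2))))) hvanish]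
    have hmem1 : (⟨a, haM⟩ : Fin (Nt + (ℓ + 2)))
        ∉ ({⟨b, hbM⟩, ⟨c, hcM⟩} : Finset (Fin (Nt + (ℓ + 2)))) := by
      simp only [Finset.mem_insert, Finset.mem_singleton, Fin.mk.injEq]
      omega
    have hmem2 : (⟨b, hbM⟩ : Fin (Nt + (ℓ + 2)))
        ∉ ({⟨c, hcM⟩} : Finset (Fin (Nt + (ℓ + 2)))) := by
      simp only [Finset.mem_singleton, Fin.mk.injEq]
      omega
    rw [Finset.sum_insert hmem1, Finset.sum_insert hmem2, Finset.sum_singleton]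
    have hupa : Function.update (hp ℓ Nt T (E3 a b c)) ⟨a, haM⟩ true
        = hp ℓ Nt T (E2 b c) := by
      rw [update_hp_true T (E3 a b c) ⟨a, haM⟩ (show a < ℓ + 2 by omega)]
      apply hp_congr
      intro t ht
      unfold E3 E2
      simp only [Fin.val_mk]
      omega
    have hupb : Function.update (hp ℓ Nt T (E3 a b c)) ⟨b, hbM⟩ true
        = hp ℓ Nt T (E2 a c) := by
      rw [update_hp_true T (E3 a b c) ⟨b, hbM⟩ (show b < ℓ + 2 by omega)]
      apply hp_congr
      intro t ht
      unfold E3 E2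
      simp only [Fin.val_mk]
      omega
    have hupc : Function.update (hp ℓ Nt T (E3 a b c)) ⟨c, hcM⟩ true
        = hp ℓ Nt T (E2 a b) := by
      rw [update_hp_true T (E3 a b c) ⟨c, hcM⟩ (show c < ℓ + 2 by omega)]
      apply hp_congr
      intro t ht
      unfold E3 E2
      simp only [Fin.val_mk]
      omega
    have hS1a : S1 (Nt + (ℓ + 2)) ℓ ⟨a, haM⟩ := show a < ℓ + 2 by omega
    have hS1b : S1 (Nt + (ℓ + 2)) ℓ ⟨b, hbM⟩ := show b < ℓ + 2 by omega
    have hS1c : S1 (Nt + (ℓ + 2)) ℓ ⟨c, hcM⟩ := show c < ℓ + 2 by omega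
    have hva : hp ℓ Nt T (E3 a b c) ⟨a, haM⟩ = false := by
      unfold hp
      rw [dif_pos (show a < ℓ + 2 by omega)]
      simp [E3]
    have hvb : hp ℓ Nt T (E3 a b c) ⟨b, hbM⟩ = false := by
      unfold hp
      rw [dif_pos (show b < ℓ + 2 by omega)]
      simp [E3]
    have hvc : hp ℓ Nt T (E3 a b c) ⟨c, hcM⟩ = false := by
      unfold hp
      rw [dif_pos (show c < ℓ + 2 by omega)]
      simp [E3]
    rw [hupa, hupb, hupc,
      sgn_E3_a T hab hbc hc ⟨a, haM⟩ rfl, sgn_E3_b T hab hbc hc ⟨b, hbM⟩ rfl,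
      sgn_E3_c T hab hbc hc ⟨c, hcM⟩ rfl,
      wfun_pair ℓ Nt T b₁ hbc hc, wfun_pair ℓ Nt T b₁ (show a < c by omega) hc,
      wfun_pair ℓ Nt T b₁ hab (show b ≤ ℓ + 1 by omega),
      Hpair b c hbc hc, Hpair a c (by omega) hc, Hpair a b hab (by omega)]
    simp only [hS1a, hS1b, hS1c, hva, hvb, hvc, eq_self_iff_true, true_and]
    split_ifs <;>
      first
        | (exfalso; omega)
        | (simp only [zero_add, add_zero, zero_mul, mul_zero, ← pow_add]
           first
             | rfl
             | exact neg_one_pow_cancel _ _ (by omega)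
             | exact neg_one_pow_cancel' _ _ (by omega))
        | (simp; done)
  · apply Finset.sum_eq_zero
    intro i _
    split_ifs with h
    · obtain ⟨hS, hval, hOK⟩ := h
      have hih : i.1 < ℓ + 2 := hS
      rw [wfun_zero, zero_mul]
      intro x y hxy hy heq
      have hσ : σ = hp ℓ Nt T (fun t => E2 x y t ∨ t = i.1) := by
        rw [← update_hp_false T (E2 x y) i hih, ← heq]
        funext j
        rcases eq_or_ne j i with rfl | hne
        · rw [Function.update_self]
          exact hval
        · rw [Function.update_of_ne hne, Function.update_of_ne hne]
      have hiv : ¬ E2 x y i.1 := by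
        have h2 := congrFun heq i
        rw [Function.update_self] at h2
        unfold hp at h2
        rw [dif_pos hih] at h2
        exact of_decide_eq_true h2.symm
      unfold E2 at hiv
      push_neg at hiv
      have hiℓ : i.1 ≤ ℓ + 1 := by omega
      apply hshape
      rcases (show i.1 < x ∨ (x < i.1 ∧ i.1 < y) ∨ y < i.1 by omega) with h | h | h
      · exact ⟨i.1, x, y, by omega, by omega, by omega, by
          rw [hσ]; apply hp_congr; intro t ht; unfold E2 E3; tauto⟩
      · exact ⟨x, i.1, y, by omega, by omega, by omega, by
          rw [hσ]; apply hp_congr; intro t ht; unfold E2 E3; tauto⟩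
      · exact ⟨x, y, i.1, by omega, by omega, by omega, by
          rw [hσ]; apply hp_congr; intro t ht; unfold E2 E3; tauto⟩
    · rfl
lemma LQ_zero (ℓ Nt : ℕ) (OKN : Config (Nt + (ℓ + 2)) → Prop) (T : Config Nt) (b₁ r : ℕ)
    (hb₁ : b₁ ≤ ℓ) (hrb : r ≤ b₁)
    (Hpair : ∀ a b, a < b → b ≤ ℓ + 1 →
      (OKN (hp ℓ Nt T (E2 a b)) ↔ (a ≤ b₁ ∧ r + 1 ≤ b)))
    (φ : AState (Nt + (ℓ + 2)) OKN) :
    ∑ τ : {σ : Config (Nt + (ℓ + 2)) // OKN σ},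
      wfun ℓ Nt T b₁ τ.1 * (Qop (Nt + (ℓ + 2)) OKN (S1 (Nt + (ℓ + 2)) ℓ) φ) τ = 0 := by
  simp only [Qop, QopA, Matrix.mulVecLin_apply, Matrix.mulVec, dotProduct, QmatA,
    one_mul]
  simp only [Finset.sum_mul, Finset.mul_sum]
  rw [Finset.sum_comm]
  apply Finset.sum_eq_zero
  intro σ _
  rw [Finset.sum_comm]
  have hstep : ∀ i : Fin (Nt + (ℓ + 2)),
      (∑ τ : {x : Config (Nt + (ℓ + 2)) // OKN x},
        wfun ℓ Nt T b₁ τ.1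
          * ((if S1 (Nt + (ℓ + 2)) ℓ i ∧ σ.1 i = false ∧ τ.1 = Function.update σ.1 i true
              then sgn σ.1 i else 0) * φ σ))
      = (if S1 (Nt + (ℓ + 2)) ℓ i ∧ σ.1 i = false ∧ OKN (Function.update σ.1 i true)
         then wfun ℓ Nt T b₁ (Function.update σ.1 i true) * sgn σ.1 i else 0) * φ σ := by
    intro i
    have h1 : ∀ τ : {x : Config (Nt + (ℓ + 2)) // OKN x},
        wfun ℓ Nt T b₁ τ.1
          * ((if S1 (Nt + (ℓ + 2)) ℓ i ∧ σ.1 i = false ∧ τ.1 = Function.update σ.1 i true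
              then sgn σ.1 i else 0) * φ σ)
        = if τ.1 = Function.update σ.1 i true then
            (if S1 (Nt + (ℓ + 2)) ℓ i ∧ σ.1 i = false
             then wfun ℓ Nt T b₁ τ.1 * sgn σ.1 i * φ σ else 0) else 0 := by
      intro τ
      by_cases hτ : τ.1 = Function.update σ.1 i true
      · rw [if_pos hτ]
        by_cases hC : S1 (Nt + (ℓ + 2)) ℓ i ∧ σ.1 i = false
        · rw [if_pos ⟨hC.1, hC.2, hτ⟩, if_pos hC]
          ring
        · rw [if_neg (fun h => hC ⟨h.1, h.2.1⟩), if_neg hC]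
          ring
      · rw [if_neg hτ, if_neg (fun h => hτ h.2.2)]
        ring
    rw [Finset.sum_congr rfl (fun τ _ => h1 τ),
      sum_subtype_ite (P := OKN) (Function.update σ.1 i true)
        (fun τ => if S1 (Nt + (ℓ + 2)) ℓ i ∧ σ.1 i = false
          then wfun ℓ Nt T b₁ τ.1 * sgn σ.1 i * φ σ else 0)]
    split_ifs with h1' h2' h3' <;> try ring
    all_goals try tauto
  rw [Finset.sum_congr rfl (fun i _ => hstep i), ← Finset.sum_mul,
    key_sum ℓ Nt OKN T b₁ r hb₁ hrb Hpair σ.1, zero_mul]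

lemma LG_val (ℓ Nt : ℕ) (OKN : Config (Nt + (ℓ + 2)) → Prop) (OKt : Config Nt → Prop)
    (T : Config Nt) (hT : OKt T) (b₁ : ℕ) (hb₁ : b₁ ≤ ℓ)
    (hglue : OKN (hp ℓ Nt T (E2 0 (ℓ + 1)))) (ψ' : AState Nt OKt) :
    ∑ τ : {σ : Config (Nt + (ℓ + 2)) // OKN σ},
      wfun ℓ Nt T b₁ τ.1 * (Gop ℓ Nt OKN OKt ψ') τ = (-1 : ℂ) ^ (ℓ + 1) * ψ' ⟨T, hT⟩ := by
  simp only [Gop, Matrix.mulVecLin_apply, Matrix.mulVec, dotProduct, Gmat]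
  simp only [Finset.mul_sum]
  rw [Finset.sum_comm]
  have hstep : ∀ σ' : {x : Config Nt // OKt x},
      (∑ τ : {x : Config (Nt + (ℓ + 2)) // OKN x},
        wfun ℓ Nt T b₁ τ.1 * ((if τ.1 = glue ℓ Nt σ'.1 then (1 : ℂ) else 0) * ψ' σ'))
      = if σ'.1 = T then (-1 : ℂ) ^ (ℓ + 1) * ψ' σ' else 0 := by
    intro σ'
    have h1 : ∀ τ : {x : Config (Nt + (ℓ + 2)) // OKN x},
        wfun ℓ Nt T b₁ τ.1 * ((if τ.1 = glue ℓ Nt σ'.1 then (1 : ℂ) else 0) * ψ' σ')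
        = if τ.1 = glue ℓ Nt σ'.1 then wfun ℓ Nt T b₁ τ.1 * ψ' σ' else 0 := by
      intro τ
      split_ifs <;> ring
    rw [Finset.sum_congr rfl (fun τ _ => h1 τ),
      sum_subtype_ite (P := OKN) (glue ℓ Nt σ'.1) (fun τ => wfun ℓ Nt T b₁ τ.1 * ψ' σ')]
    by_cases hσT : σ'.1 = T
    · rw [if_pos hσT]
      rw [dif_pos (by rw [hσT, glue_eq_hp]; exact hglue)]
      show wfun ℓ Nt T b₁ (glue ℓ Nt σ'.1) * ψ' σ' = (-1 : ℂ) ^ (ℓ + 1) * ψ' σ'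
      rw [hσT, glue_eq_hp, wfun_pair ℓ Nt T b₁ (show 0 < ℓ + 1 by omega) le_rfl,
        if_pos (show b₁ < ℓ + 1 by omega)]
      norm_num
    · rw [if_neg hσT]
      by_cases hOK : OKN (glue ℓ Nt σ'.1)
      · rw [dif_pos hOK]
        have hw : wfun ℓ Nt T b₁ (glue ℓ Nt σ'.1) = 0 := by
          rw [glue_eq_hp]
          apply wfun_zero
          intro a b hab hb heq
          exact hσT (hp_tail_eq heq)
        rw [hw, zero_mul]
      · rw [dif_neg hOK]
  rw [Finset.sum_congr rfl (fun σ' _ => hstep σ'),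
    sum_subtype_ite (P := OKt) T (fun σ' => (-1 : ℂ) ^ (ℓ + 1) * ψ' σ'), dif_pos hT]
lemma cyc_extc {M : ℕ} (σ : Config M) (i : Fin M) (k : ℕ) :
    σ (cyc i k) = extc σ ((i.1 + k) % M) := by
  rw [extc_lt σ (Nat.mod_lt _ i.pos)]
  rfl

lemma extc_hp_tail {ℓ Nt : ℕ} (T : Config Nt) (E : ℕ → Prop) (u : ℕ) :
    extc (hp ℓ Nt T E) (ℓ + 2 + u) = extc T u := by
  rw [extc_hp, if_neg (by omega)]
  congr 1
  omega

lemma extc_hp_head {ℓ Nt : ℕ} (T : Config Nt) {a b : ℕ} {t : ℕ} (ht : t < ℓ + 2) :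
    extc (hp ℓ Nt T (E2 a b)) t = decide (¬ (t = a ∨ t = b)) := by
  rw [extc_hp, if_pos ht]
  exact decide_eq_decide.2 Iff.rfl

lemma extc_hp_head_occ {ℓ Nt : ℕ} (T : Config Nt) {a b : ℕ} {t : ℕ} (ht : t < ℓ + 2)
    (h1 : t ≠ a) (h2 : t ≠ b) : extc (hp ℓ Nt T (E2 a b)) t = true := by
  rw [extc_hp_head T ht, decide_eq_true_eq]
  tauto

lemma extc_hp_head_emp {ℓ Nt : ℕ} (T : Config Nt) {a b : ℕ} {t : ℕ} (ht : t < ℓ + 2)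
    (h1 : t = a ∨ t = b) : extc (hp ℓ Nt T (E2 a b)) t = false := by
  rw [extc_hp_head T ht, decide_eq_false_iff_not]
  exact not_not_intro h1

lemma tail_r_exists {Nt : ℕ} (T : Config Nt) : ∃ k, extc T k = false :=
  ⟨Nt, by unfold extc; rw [dif_neg (by omega)]⟩

lemma tail_r_min {Nt : ℕ} (T : Config Nt) {k : ℕ} (hk : k < Nat.find (tail_r_exists T)) :
    extc T k = true := by
  have := Nat.find_min (tail_r_exists T) hk
  cases h : extc T k
  · exact absurd h this
  · rfl

lemma perT_extc {ℓ Nt : ℕ} (hNt : 0 < Nt) {T : Config Nt} (hT : PerOK Nt ℓ T)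
    (j : ℕ) (hj : j < Nt) : ∃ k ≤ ℓ, extc T ((j + k) % Nt) = false := by
  obtain ⟨k, hk, hv⟩ := hT ⟨j, hj⟩
  exact ⟨k, hk, (cyc_extc T ⟨j, hj⟩ k).symm.trans hv⟩

lemma per_facts {ℓ Nt : ℕ} (hℓ : 1 ≤ ℓ) (hNt : ℓ < Nt) {T : Config Nt}
    (hT : PerOK Nt ℓ T) :
    ∃ b₁ r, b₁ ≤ ℓ ∧ r ≤ b₁ ∧ ∀ a b, a < b → b ≤ ℓ + 1 →
      (PerOK (Nt + (ℓ + 2)) ℓ (hp ℓ Nt T (E2 a b)) ↔ (a ≤ b₁ ∧ r + 1 ≤ b)) := by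
  set r := Nat.find (tail_r_exists T) with hrdef
  have hrf : extc T r = false := Nat.find_spec (tail_r_exists T)
  have hrmin : ∀ k < r, extc T k = true := fun k hk => tail_r_min T hk
  have hrℓ : r ≤ ℓ := by
    obtain ⟨k, hk, hv⟩ := perT_extc (by omega) hT 0 (by omega)
    have hmod : (0 + k) % Nt = k := by
      rw [Nat.zero_add]
      exact Nat.mod_eq_of_lt (by omega)
    rw [hmod] at hv
    exact le_trans (Nat.find_min' _ hv) hk
  have hrNt : r < Nt := by omega
  have hex_e : ∃ k, extc T (Nt - 1 - k) = false := by
    refine ⟨Nt - 1 - r, ?_⟩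
    have h : Nt - 1 - (Nt - 1 - r) = r := by omega
    rw [h]
    exact hrf
  set e := Nat.find hex_e with hedef
  have hef : extc T (Nt - 1 - e) = false := Nat.find_spec hex_e
  have hemin : ∀ k < e, extc T (Nt - 1 - k) = true := by
    intro k hk
    have := Nat.find_min hex_e hk
    cases h : extc T (Nt - 1 - k)
    · exact absurd h this
    · rfl
  have heNt : e ≤ Nt - 1 - r := Nat.find_min' hex_e (by
    have h : Nt - 1 - (Nt - 1 - r) = r := by omega
    rw [h]; exact hrf)
  have her : r + e ≤ ℓ := by
    by_cases he0 : e = 0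
    · omega
    · by_contra hcon
      obtain ⟨k, hk, hv⟩ := perT_extc (by omega) hT (Nt - e) (by omega)
      by_cases hke : k < e
      · have hmod : (Nt - e + k) % Nt = Nt - 1 - (e - 1 - k) := by
          rw [Nat.mod_eq_of_lt (by omega)]
          omega
        rw [hmod, hemin (e - 1 - k) (by omega)] at hv
        exact Bool.noConfusion hv
      · have hmod : (Nt - e + k) % Nt = k - e := by
          have h2 : Nt - e + k = Nt + (k - e) := by omega
          rw [h2, Nat.add_mod_left]
          exact Nat.mod_eq_of_lt (by omega)
        rw [hmod, hrmin (k - e) (by omega)] at hv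
        exact Bool.noConfusion hv
  refine ⟨ℓ - e, r, by omega, by omega, ?_⟩
  intro a b hab hb
  constructor
  · -- allowed → bounds
    intro hOK
    have hb' : r + 1 ≤ b := by
      by_contra hcon
      have hbr : b ≤ r := by omega
      obtain ⟨k, hk, hv⟩ := hOK ⟨b + 1, by omega⟩
      have hv' : extc (hp ℓ Nt T (E2 a b)) ((b + 1 + k) % (Nt + (ℓ + 2))) = false :=
        (cyc_extc _ _ _).symm.trans hv
      rw [Nat.mod_eq_of_lt (by omega)] at hv'
      by_cases hh : b + 1 + k < ℓ + 2
      · rw [extc_hp_head_occ T hh (by omega) (by omega)] at hv'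
        exact Bool.noConfusion hv'
      · rw [show b + 1 + k = ℓ + 2 + (b + 1 + k - (ℓ + 2)) by omega, extc_hp_tail,
          hrmin _ (by omega)] at hv'
        exact Bool.noConfusion hv'
    refine ⟨?_, hb'⟩
    by_cases he0 : e = 0
    · omega
    · by_contra hcon
      have hae : ℓ - e + 1 ≤ a := by omega
      obtain ⟨k, hk, hv⟩ := hOK ⟨Nt + (ℓ + 2) - e, by omega⟩
      have hv' : extc (hp ℓ Nt T (E2 a b)) ((Nt + (ℓ + 2) - e + k) % (Nt + (ℓ + 2)))
          = false := (cyc_extc _ _ _).symm.trans hv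
      by_cases hke : k < e
      · have hmod : (Nt + (ℓ + 2) - e + k) % (Nt + (ℓ + 2))
            = ℓ + 2 + (Nt - 1 - (e - 1 - k)) := by
          rw [Nat.mod_eq_of_lt (by omega)]
          omega
        rw [hmod, extc_hp_tail, hemin (e - 1 - k) (by omega)] at hv'
        exact Bool.noConfusion hv'
      · have hmod : (Nt + (ℓ + 2) - e + k) % (Nt + (ℓ + 2)) = k - e := by
          have h2 : Nt + (ℓ + 2) - e + k = (Nt + (ℓ + 2)) + (k - e) := by omega
          rw [h2, Nat.add_mod_left]
          exact Nat.mod_eq_of_lt (by omega)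
        rw [hmod, extc_hp_head_occ T (by omega) (by omega) (by omega)] at hv'
        exact Bool.noConfusion hv'
  · -- bounds → allowed
    rintro ⟨ha, hb'⟩
    intro i
    have hsM : i.1 < Nt + (ℓ + 2) := i.isLt
    have hkey : ∀ p < Nt + (ℓ + 2), extc (hp ℓ Nt T (E2 a b)) p = false → i.1 ≤ p →
        p - i.1 ≤ ℓ → ∃ k ≤ ℓ, hp ℓ Nt T (E2 a b) (cyc i k) = false := by
      intro p hpM hpv hip hpl
      refine ⟨p - i.1, hpl, ?_⟩
      rw [cyc_extc (hp ℓ Nt T (E2 a b)) i (p - i.1)]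
      have hmod : (i.1 + (p - i.1)) % (Nt + (ℓ + 2)) = p := by
        rw [show i.1 + (p - i.1) = p by omega]
        exact Nat.mod_eq_of_lt hpM
      rw [hmod]
      exact hpv
    rcases (show i.1 ≤ a ∨ (a < i.1 ∧ i.1 ≤ b) ∨ (b < i.1 ∧ i.1 ≤ ℓ + 2 + r)
        ∨ ℓ + 2 + r < i.1 by omega) with hs | hs | hs | hs
    · exact hkey a (by omega) (extc_hp_head_emp T (by omega) (Or.inl rfl)) hs (by omega)
    · exact hkey b (by omega) (extc_hp_head_emp T (by omega) (Or.inr rfl)) (by omega)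
        (by omega)
    · refine hkey (ℓ + 2 + r) (by omega) ?_ (by omega) (by omega)
      rw [extc_hp_tail]
      exact hrf
    · set j := i.1 - (ℓ + 2) with hjdef
      have hjr : r < j := by omega
      have hjNt : j < Nt := by omega
      by_cases hrun : ∃ k', k' ≤ ℓ ∧ j + k' < Nt ∧ extc T (j + k') = false
      · obtain ⟨k', hk', hlt, hvf⟩ := hrun
        refine hkey (ℓ + 2 + (j + k')) (by omega) ?_ (by omega) (by omega)
        rw [extc_hp_tail]
        exact hvf
      · push_neg at hrun
        by_cases hjl : j + ℓ < Nt
        · exfalso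
          obtain ⟨k, hk, hv⟩ := perT_extc (by omega) hT j hjNt
          rw [Nat.mod_eq_of_lt (by omega)] at hv
          have := hrun k hk (by omega)
          rw [hv] at this
          exact this rfl
        · have hje : Nt - j ≤ e := by
            rw [hedef]
            rw [Nat.le_find_iff]
            intro m hm hmv
            have hmj : j ≤ Nt - 1 - m := by omega
            have := hrun (Nt - 1 - m - j) (by omega) (by omega)
            rw [show j + (Nt - 1 - m - j) = Nt - 1 - m by omega] at this
            exact this hmv
          refine ⟨(Nt - j) + a, by omega, ?_⟩
          rw [cyc_extc (hp ℓ Nt T (E2 a b)) i ((Nt - j) + a)]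
          have hmod : (i.1 + ((Nt - j) + a)) % (Nt + (ℓ + 2)) = a := by
            rw [show i.1 + ((Nt - j) + a) = (Nt + (ℓ + 2)) + a by omega,
              Nat.add_mod_left]
            exact Nat.mod_eq_of_lt (by omega)
          rw [hmod]
          exact extc_hp_head_emp T (by omega) (Or.inl rfl)

lemma open_facts {ℓ Nt c₁ cN : ℕ} (hℓ : 1 ≤ ℓ) (hNt : ℓ < Nt) (hc₁ : c₁ ≤ ℓ)
    (hcN : cN ≤ ℓ) {T : Config Nt} (hT : OpenOK Nt ℓ c₁ cN T) :
    ∃ b₁ r, b₁ ≤ ℓ ∧ r ≤ b₁ ∧ ∀ a b, a < b → b ≤ ℓ + 1 →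
      (OpenOK (Nt + (ℓ + 2)) ℓ c₁ cN (hp ℓ Nt T (E2 a b)) ↔ (a ≤ b₁ ∧ r + 1 ≤ b)) := by
  set r := Nat.find (tail_r_exists T) with hrdef
  have hrf : extc T r = false := Nat.find_spec (tail_r_exists T)
  have hrmin : ∀ k < r, extc T k = true := fun k hk => tail_r_min T hk
  obtain ⟨hTrun, hTc₁, hTcN⟩ := hT
  have hrc₁ : r ≤ c₁ := by
    by_contra hcon
    exact hTc₁ ⟨by omega, fun k hk => hrmin k (by omega)⟩
  refine ⟨c₁, r, hc₁, hrc₁, ?_⟩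
  intro a b hab hb
  constructor
  · rintro ⟨h1, h2, h3⟩
    constructor
    · by_contra hcon
      refine h2 ⟨by omega, fun k hk => ?_⟩
      exact extc_hp_head_occ T (by omega) (by omega) (by omega)
    · by_contra hcon
      have hbr : b ≤ r := by omega
      refine h1 (b + 1) (fun k hk => ?_)
      by_cases hh : b + 1 + k < ℓ + 2
      · exact extc_hp_head_occ T hh (by omega) (by omega)
      · rw [show b + 1 + k = ℓ + 2 + (b + 1 + k - (ℓ + 2)) by omega, extc_hp_tail]
        exact hrmin _ (by omega)
  · rintro ⟨ha, hb'⟩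
    refine ⟨?_, ?_, ?_⟩
    · intro s hall
      rcases (show s ≤ a ∨ (a < s ∧ s ≤ b) ∨ (b < s ∧ s ≤ ℓ + 2 + r)
          ∨ ℓ + 2 + r < s by omega) with hs | hs | hs | hs
      · have := hall (a - s) (by omega)
        rw [show s + (a - s) = a by omega,
          extc_hp_head_emp T (by omega) (Or.inl rfl)] at this
        exact Bool.noConfusion this
      · have := hall (b - s) (by omega)
        rw [show s + (b - s) = b by omega,
          extc_hp_head_emp T (by omega) (Or.inr rfl)] at this
        exact Bool.noConfusion this
      · have := hall (ℓ + 2 + r - s) (by omega)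
        rw [show s + (ℓ + 2 + r - s) = ℓ + 2 + r by omega, extc_hp_tail, hrf] at this
        exact Bool.noConfusion this
      · refine hTrun (s - (ℓ + 2)) (fun k hk => ?_)
        have := hall k hk
        rw [show s + k = ℓ + 2 + (s - (ℓ + 2) + k) by omega, extc_hp_tail] at this
        exact this
    · rintro ⟨-, hall⟩
      have := hall a (by omega)
      rw [extc_hp_head_emp T (by omega) (Or.inl rfl)] at this
      exact Bool.noConfusion this
    · rintro ⟨-, hall⟩
      refine hTcN ⟨by omega, fun k hk => ?_⟩
      have := hall k hk
      rw [show Nt + (ℓ + 2) - 1 - k = ℓ + 2 + (Nt - 1 - k) by omega, extc_hp_tail] at this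
      exact this
/-- For a chain of `N = Ñ + (ℓ+2) > 2ℓ+2` sites with periodic or special boundary
conditions, the equation `G ψ' = Q₁ φ` has no solutions other than `ψ' = 0`
(and hence `Q₁ φ = 0`). -/
theorem G_image_not_Q1_coboundary (ℓ Nt : ℕ) (hℓ : 1 ≤ ℓ) (hNt : ℓ < Nt)
    (OKN : Config (Nt + (ℓ + 2)) → Prop) (OKt : Config Nt → Prop)
    (hBC : (OKN = PerOK (Nt + (ℓ + 2)) ℓ ∧ OKt = PerOK Nt ℓ) ∨
      ∃ c₁ cN, c₁ ≤ ℓ ∧ cN ≤ ℓ ∧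
        OKN = OpenOK (Nt + (ℓ + 2)) ℓ c₁ cN ∧ OKt = OpenOK Nt ℓ c₁ cN) :
    ∀ (ψ' : AState Nt OKt) (φ : AState (Nt + (ℓ + 2)) OKN),
      Gop ℓ Nt OKN OKt ψ' = Qop (Nt + (ℓ + 2)) OKN (S1 (Nt + (ℓ + 2)) ℓ) φ →
      ψ' = 0 ∧ Qop (Nt + (ℓ + 2)) OKN (S1 (Nt + (ℓ + 2)) ℓ) φ = 0 := by
  have hfacts : ∀ T : Config Nt, OKt T →
      ∃ b₁ r, b₁ ≤ ℓ ∧ r ≤ b₁ ∧ ∀ a b, a < b → b ≤ ℓ + 1 →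
        (OKN (hp ℓ Nt T (E2 a b)) ↔ (a ≤ b₁ ∧ r + 1 ≤ b)) := by
    intro T hT
    rcases hBC with ⟨hN, ht⟩ | ⟨c₁, cN, hc₁, hcN, hN, ht⟩
    · subst hN; subst ht
      exact per_facts hℓ hNt hT
    · subst hN; subst ht
      exact open_facts hℓ hNt hc₁ hcN hT
  intro ψ' φ h
  have hz : ψ' = 0 := by
    funext T
    obtain ⟨b₁, r, hb₁, hrb, Hpair⟩ := hfacts T.1 T.2
    have hglue : OKN (hp ℓ Nt T.1 (E2 0 (ℓ + 1))) :=
      (Hpair 0 (ℓ + 1) (by omega) le_rfl).2 ⟨Nat.zero_le _, by omega⟩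
    have h1 := LG_val ℓ Nt OKN OKt T.1 T.2 b₁ hb₁ hglue ψ'
    have h2 := LQ_zero ℓ Nt OKN T.1 b₁ r hb₁ hrb Hpair φ
    rw [h, h2] at h1
    have hne : ((-1 : ℂ)) ^ (ℓ + 1) ≠ 0 := pow_ne_zero _ (by norm_num)
    have h3 : ψ' ⟨T.1, T.2⟩ = 0 := (mul_eq_zero.mp h1.symm).resolve_left hne
    exact h3
  refine ⟨hz, ?_⟩
  rw [← h, hz, map_zero]

end
end
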